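/- arXiv:1806.10260 — 6 statements merged into one kernel-verified Lean document; each statement's English description precedes it below -/
import Mathlib

section
/- Higman's Lemma: if (Σ, ≤) is a well-quasi-order, then the set Σ* of finite sequences over Σ is a well-quasi-order under the relation: (a_1,...,a_m) ⪯ (b_1,...,b_n) iff there is a strictly increasing function f : {1,...,m} → {1,...,n} with a_i ≤ b_{f(i)} for each i. -/
/-- Higman's Lemma: if `(Σ, ≤)` is a well-quasi-order then the finite sequences over
`Σ`, ordered by the subword embedding order (an order-preserving injection of indices
with `a i ≤ b (f i)`), form a well-quasi-order. -/
theorem stmt_4 {σ : Type*} (le : σ → σ → Prop)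
    (hrefl : ∀ a, le a a) (htrans : ∀ a b c, le a b → le b c → le a c)
    (hwqo : ∀ f : ℕ → σ, ∃ i j, i < j ∧ le (f i) (f j)) :
    ∀ L : ℕ → List σ, ∃ i j, i < j ∧ List.SublistForall₂ le (L i) (L j) := by
  intro L
  haveI : IsRefl σ le := ⟨hrefl⟩
  haveI : IsTrans σ le := ⟨htrans⟩
  have hs : (Set.univ : Set σ).PartiallyWellOrderedOn le := by
    rw [Set.partiallyWellOrderedOn_iff_exists_lt]; intro f _
    obtain ⟨i, j, hij, h⟩ := hwqo f
    exact ⟨i, j, hij, h⟩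
  haveI : IsPreorder σ le := { refl := hrefl, trans := htrans }
  have := hs.partiallyWellOrderedOn_sublistForall₂ le
  obtain ⟨i, j, hij, h⟩ := Set.partiallyWellOrderedOn_iff_exists_lt.1 this L (fun n => by simp [Set.mem_setOf_eq])
  exact ⟨i, j, hij, h⟩
end

section
/- If a path presentation [P,Q] contains a k×k square, then the lattice path matroid M[P,Q] has a U_{k,2k}-minor. -/
open Matroid

/-- Steps: `true` is a North step, `false` is an East step. -/
def nCount (w : List Bool) : ℕ := w.count true

def eCount (w : List Bool) : ℕ := w.count false

/-- `P` and `Q` are lattice paths from `(0,0)` to `(m,r)` with `P` never above `Q`. -/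
structure IsLatticePair (P Q : List Bool) (m r : ℕ) : Prop where
  lenP : P.length = m + r
  lenQ : Q.length = m + r
  northP : nCount P = r
  northQ : nCount Q = r
  notAbove : ∀ i, nCount (P.take i) ≤ nCount (Q.take i)

/-- The (1-indexed) positions of the North steps of a path. -/
def northPositions (w : List Bool) : List ℕ :=
  ((List.range w.length).filter (fun j => w.getD j false)).map (· + 1)

/-- `X` is a partial transversal of the intervals `N_i = [l_i, u_i]`, `i < r`, where
`u_i` (resp. `l_i`) is the position of the `i`-th North step of `P` (resp. `Q`). -/
def IsPartialTransversal (P Q : List Bool) (r : ℕ) (X : Set ℕ) : Prop :=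
  ∃ f : ℕ → ℕ, Set.InjOn f X ∧ ∀ x ∈ X, f x < r ∧
    (northPositions Q).getD (f x) 0 ≤ x ∧ x ≤ (northPositions P).getD (f x) 0

/-- `M` is the lattice path matroid `M[P,Q]`: the transversal matroid on `[m+r]`
whose independent sets are the partial transversals of the intervals `N_i`. -/
def IsLPM (M : Matroid ℕ) (P Q : List Bool) (m r : ℕ) : Prop :=
  IsLatticePair P Q m r ∧ M.E = Set.Icc 1 (m + r) ∧
    ∀ X : Set ℕ, M.Indep X ↔ X ⊆ M.E ∧ IsPartialTransversal P Q r X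

/-- `[P,Q]` has a `k × k` square at `i`: the length-`i` prefix of `P` has exactly `k`
more East steps than that of `Q`, and the prefix of `Q` has `k` more North steps. -/
def HasSquareAt (P Q : List Bool) (k i : ℕ) : Prop :=
  eCount (P.take i) = eCount (Q.take i) + k ∧ nCount (Q.take i) = nCount (P.take i) + k

/-- The square-width of a presentation: the largest `k` such that it has a `k × k` square. -/
noncomputable def squareWidth (P Q : List Bool) : ℕ :=
  sSup {k | ∃ i, HasSquareAt P Q k i}

/-- `N` is a minor of `M`: obtained by contracting a set `C` and deleting a set `D`. -/
def IsMinorOf {α : Type*} (N M : Matroid α) : Prop :=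
  ∃ C D : Set α, C ⊆ M.E ∧ D ⊆ M.E ∧ Disjoint C D ∧
    N = ((M✶ ↾ (M.E \ C))✶) ↾ ((M.E \ C) \ D)

/-- An isomorphism between matroids: a bijection of ground sets preserving independence. -/
def MatroidIso {α β : Type*} (M : Matroid α) (N : Matroid β) : Prop :=
  ∃ f : α → β, Set.BijOn f M.E N.E ∧ ∀ X ⊆ M.E, (M.Indep X ↔ N.Indep (f '' X))

/-- `N` is isomorphic to a minor of `M`. -/
def IsIsoMinorOf {α β : Type*} (N : Matroid α) (M : Matroid β) : Prop :=
  ∃ N' : Matroid β, IsMinorOf N' M ∧ MatroidIso N' N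

/-- `M` is (isomorphic to) the uniform matroid `U_{r,n}`. -/
def IsUniform {α : Type*} (M : Matroid α) (r n : ℕ) : Prop :=
  M.E.encard = (n : ℕ∞) ∧ ∀ X ⊆ M.E, (M.Indep X ↔ X.encard ≤ (r : ℕ∞))

/-- The rank (in `ℕ∞`) of a set in a matroid. -/
noncomputable def eRk {α : Type*} (M : Matroid α) (A : Set α) : ℕ∞ :=
  ⨆ I : {I : Set α // M.Indep I ∧ I ⊆ A}, (I : Set α).encard

/-- Binary trees, used to model the cubic trees of branch decompositions. -/
inductive BTree (α : Type*) where
  | leaf : α → BTree α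
  | node : BTree α → BTree α → BTree α

def BTree.leafList {α : Type*} : BTree α → List α
  | .leaf a => [a]
  | .node l r => l.leafList ++ r.leafList

def BTree.subtrees {α : Type*} : BTree α → List (BTree α)
  | .leaf a => [.leaf a]
  | .node l r => .node l r :: (l.subtrees ++ r.subtrees)

/-- The connectivity value `λ(A) = r(A) + r(E \ A) − r(E) + 1`. -/
noncomputable def lamVal {α : Type*} (M : Matroid α) (A : Set α) : ℕ∞ :=
  _root_.eRk M A + _root_.eRk M (M.E \ A) - _root_.eRk M M.E + 1

/-- A branch decomposition of `M`: a (cubic) tree whose leaves are bijectively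
labelled by the elements of `M`. -/
def IsBranchDecomp {α : Type*} (M : Matroid α) (t : BTree α) : Prop :=
  t.leafList.Nodup ∧ {x | x ∈ t.leafList} = M.E

/-- The width of a branch decomposition: the maximum of `λ` over the edges
(equivalently, over the leaf sets of the subtrees). -/
noncomputable def decompWidth {α : Type*} (M : Matroid α) (t : BTree α) : ℕ∞ :=
  (t.subtrees.map (fun s => lamVal M {x | x ∈ s.leafList})).foldr max 0

/-- The branch-width of a matroid. -/
noncomputable def branchWidth {α : Type*} (M : Matroid α) : ℕ∞ :=
  sInf {w | ∃ t : BTree α, IsBranchDecomp M t ∧ decompWidth M t = w}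

/-- The lattice path `P(X)` associated to a subset `X` of `[len]`. -/
noncomputable def pathWord (X : Set ℕ) (len : ℕ) : List Bool :=
  (List.range len).map (fun j => @decide ((j + 1) ∈ X) (Classical.propDecidable _))

def glue (PB QB PT QT : List Bool) (k : ℕ) : List Bool × List Bool :=
  (PB.take (PB.length - k) ++ PT.drop k, QB.take (QB.length - k) ++ QT.drop k)

namespace Stmt9Aux

open Set Matroid

def idx (w : List Bool) : List ℕ := (List.range w.length).filter (fun j => w.getD j false)

lemma count_take_eq (w : List Bool) : ∀ t, t ≤ w.length →
    nCount (w.take t) = ((List.range t).filter (fun j => w.getD j false)).length := by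
  intro t
  induction t with
  | zero => simp [nCount]
  | succ t ih =>
    intro ht
    have ht' : t < w.length := ht
    rw [List.take_succ, List.range_succ, List.filter_append]
    unfold nCount at *
    rw [List.count_append, ih (le_of_lt ht')]
    have h1 : w[t]? = some w[t] := List.getElem?_eq_getElem ht'
    have hgd : w.getD t false = w[t] := List.getD_eq_getElem w false ht'
    rw [h1, List.length_append]
    by_cases hb : w[t] = true <;> simp [hb, hgd, h1]

lemma idx_length (w : List Bool) : (idx w).length = nCount w := by
  have := count_take_eq w w.length le_rfl
  rw [List.take_length] at this
  exact this.symm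

lemma idx_pairwise (w : List Bool) : (idx w).Pairwise (· < ·) :=
  List.pairwise_lt_range.filter _

lemma idx_split (w : List Bool) {t : ℕ} (ht : t ≤ w.length) :
    idx w = (List.range t).filter (fun j => w.getD j false) ++
      (((List.range (w.length - t)).map (t + ·)).filter (fun j => w.getD j false)) := by
  unfold idx
  rw [← List.filter_append, ← List.range_add, Nat.add_sub_cancel' ht]

lemma idx_getD_lt (w : List Bool) {t j : ℕ} (ht : t ≤ w.length)
    (hj : j < nCount (w.take t)) : (idx w).getD j 0 < t := by
  rw [idx_split w ht]
  have hlen : j < ((List.range t).filter (fun j => w.getD j false)).length := by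
    rw [← count_take_eq w t ht]; exact hj
  rw [List.getD_append _ _ _ _ hlen]
  have hmem : ((List.range t).filter (fun j => w.getD j false)).getD j 0 ∈
      (List.range t).filter (fun j => w.getD j false) := by
    rw [List.getD_eq_getElem _ _ hlen]; exact List.getElem_mem _
  have := List.mem_filter.1 hmem
  exact List.mem_range.1 (List.mem_of_mem_filter hmem)

lemma idx_getD_ge (w : List Bool) {t j : ℕ} (ht : t ≤ w.length)
    (hj1 : nCount (w.take t) ≤ j) (hj2 : j < nCount w) : t ≤ (idx w).getD j 0 := by
  have hjlen : j < (idx w).length := by rw [idx_length]; exact hj2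
  rw [idx_split w ht] at hjlen ⊢
  set A := (List.range t).filter (fun j => w.getD j false) with hA
  set B := ((List.range (w.length - t)).map (t + ·)).filter (fun j => w.getD j false) with hB
  have hAlen : A.length = nCount (w.take t) := (count_take_eq w t ht).symm
  have hAj : A.length ≤ j := by rw [hAlen]; exact hj1
  have hbd : j - A.length < B.length := by
    rw [List.length_append] at hjlen; omega
  rw [List.getD_eq_getElem _ _ hjlen, List.getElem_append_right hAj]
  have hmem : B[j - A.length]'hbd ∈ B := List.getElem_mem _
  have hmem2 := List.mem_of_mem_filter hmem
  obtain ⟨y, _, hy⟩ := List.mem_map.1 hmem2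
  omega

lemma idx_getD_lt_length (w : List Bool) {j : ℕ} (hj : j < nCount w) :
    (idx w).getD j 0 < w.length := by
  have hjlen : j < (idx w).length := by rw [idx_length]; exact hj
  rw [List.getD_eq_getElem _ _ hjlen]
  have hmem : (idx w)[j] ∈ idx w := List.getElem_mem _
  exact List.mem_range.1 (List.mem_of_mem_filter hmem)

lemma idx_strictMono (w : List Bool) {j j' : ℕ} (h : j < j') (hj' : j' < nCount w) :
    (idx w).getD j 0 < (idx w).getD j' 0 := by
  have hj'len : j' < (idx w).length := by rw [idx_length]; exact hj'
  have hjlen : j < (idx w).length := lt_trans h hj'len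
  rw [List.getD_eq_getElem _ _ hjlen, List.getD_eq_getElem _ _ hj'len]
  exact List.pairwise_iff_getElem.1 (idx_pairwise w) j j' hjlen hj'len h

lemma npos_getD (w : List Bool) {j : ℕ} (hj : j < nCount w) :
    (northPositions w).getD j 0 = (idx w).getD j 0 + 1 := by
  have hjlen : j < (idx w).length := by rw [idx_length]; exact hj
  have hjlen' : j < (northPositions w).length := by
    unfold northPositions; rw [List.length_map]; exact hjlen
  rw [List.getD_eq_getElem _ _ hjlen', List.getD_eq_getElem _ _ hjlen]
  unfold northPositions idx
  simp

lemma dual_restrict_dual_indep_iff {M : Matroid ℕ} {C X : Set ℕ} (hC : M.Indep C)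
    (hXE : X ⊆ M.E) (hXC : Disjoint X C) :
    ((M✶ ↾ (M.E \ C))✶).Indep X ↔ M.Indep (X ∪ C) := by
  have hR : M.E \ C ⊆ M✶.E := by rw [Matroid.dual_ground]; exact diff_subset
  have hXR : X ⊆ M.E \ C := subset_diff.2 ⟨hXE, hXC⟩
  rw [Matroid.dual_indep_iff_exists']
  constructor
  · rintro ⟨-, B, hB, hdj⟩
    rw [Matroid.isBase_restrict_iff hR] at hB
    obtain ⟨Bs, hBs, hBeq⟩ := hB.exists_isBase
    have hBsE : Bs ⊆ M.E := hBs.subset_ground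
    have hB₀ : M.IsBase (M.E \ Bs) := hBs.compl_isBase_of_dual
    have h1 : M✶.IsBasis ((M.E \ (M.E \ Bs)) ∩ (M.E \ C)) (M.E \ C) := by
      rw [diff_diff_cancel_left hBsE, ← hBeq]; exact hB
    have hbc : M.IsBasis ((M.E \ Bs) ∩ C) C :=
      (hB₀.inter_isBasis_iff_compl_inter_isBasis_dual hC.subset_ground).2 h1
    have hCB₀ : C ⊆ M.E \ Bs := by
      have := hC.eq_of_isBasis hbc
      rw [← this]; exact inter_subset_left
    have hXB₀ : X ⊆ M.E \ Bs := by
      intro x hx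
      refine ⟨hXE hx, fun hxBs => ?_⟩
      exact Set.disjoint_left.1 hdj hx (hBeq ▸ ⟨hxBs, hXR hx⟩)
    exact hB₀.indep.subset (union_subset hXB₀ hCB₀)
  · intro h
    refine ⟨by simpa using hXR, ?_⟩
    obtain ⟨B₀, hB₀, hUB⟩ := h.exists_isBase_superset
    have hCB₀ : C ⊆ B₀ := subset_union_right.trans hUB
    have hbc : M.IsBasis (B₀ ∩ C) C := by
      rw [inter_eq_self_of_subset_right hCB₀]; exact hC.isBasis_self
    have h1 := hB₀.compl_inter_isBasis_of_inter_isBasis hbc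
    refine ⟨(M.E \ B₀) ∩ (M.E \ C), ?_, ?_⟩
    · rw [Matroid.isBase_restrict_iff hR]; exact h1
    · exact Set.disjoint_left.2 fun x hx hx2 =>
        hx2.1.2 (hUB (subset_union_left hx))

end Stmt9Aux

/-- If a path presentation `[P,Q]` contains a `k × k` square, then the lattice path
matroid `M[P,Q]` has a `U_{k,2k}`-minor. -/
theorem stmt_9 (P Q : List Bool) (m r k : ℕ) (M : Matroid ℕ)
    (hM : IsLPM M P Q m r) (i : ℕ) (hsq : HasSquareAt P Q k i) :
    ∃ N : Matroid ℕ, IsMinorOf N M ∧ IsUniform N k (2 * k) := by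
  classical
  obtain ⟨hLP, hground, hindep⟩ := hM
  obtain ⟨-, hsqN⟩ := hsq
  set n := m + r with hn
  set t0 := min i n with ht0
  have htP : P.take i = P.take t0 := by
    rcases le_total i n with h | h
    · rw [ht0, min_eq_left h]
    · rw [ht0, min_eq_right h, List.take_of_length_le (by rw [hLP.lenP]; exact h),
        List.take_of_length_le (le_of_eq hLP.lenP)]
  have htQ : Q.take i = Q.take t0 := by
    rcases le_total i n with h | h
    · rw [ht0, min_eq_left h]
    · rw [ht0, min_eq_right h, List.take_of_length_le (by rw [hLP.lenQ]; exact h),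
        List.take_of_length_le (le_of_eq hLP.lenQ)]
  rw [htP, htQ] at hsqN
  set p := nCount (P.take t0) with hp
  set q := nCount (Q.take t0) with hq
  have hqpk : q = p + k := hsqN
  have ht0P : t0 ≤ P.length := by rw [hLP.lenP]; exact min_le_right _ _
  have ht0Q : t0 ≤ Q.length := by rw [hLP.lenQ]; exact min_le_right _ _
  have hqr : q ≤ r := by
    have h1 := (List.take_sublist t0 Q).count_le true
    rw [hq]; unfold nCount
    have h2 : Q.count true = r := hLP.northQ
    omega
  have hpq : p ≤ q := by omega
  set l : ℕ → ℕ := fun j => (northPositions Q).getD j 0 with hldef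
  set u : ℕ → ℕ := fun j => (northPositions P).getD j 0 with hudef
  have hlv : ∀ j < r, l j = (Stmt9Aux.idx Q).getD j 0 + 1 := fun j hj =>
    Stmt9Aux.npos_getD Q (by rw [hLP.northQ]; exact hj)
  have huv : ∀ j < r, u j = (Stmt9Aux.idx P).getD j 0 + 1 := fun j hj =>
    Stmt9Aux.npos_getD P (by rw [hLP.northP]; exact hj)
  have hl1 : ∀ j < r, 1 ≤ l j := fun j hj => by rw [hlv j hj]; omega
  have hu1 : ∀ j < r, 1 ≤ u j := fun j hj => by rw [huv j hj]; omega
  have hln : ∀ j < r, l j ≤ n := fun j hj => by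
    have := Stmt9Aux.idx_getD_lt_length Q (by rw [hLP.northQ]; exact hj)
    rw [hLP.lenQ] at this; rw [hlv j hj]; omega
  have hun : ∀ j < r, u j ≤ n := fun j hj => by
    have := Stmt9Aux.idx_getD_lt_length P (by rw [hLP.northP]; exact hj)
    rw [hLP.lenP] at this; rw [huv j hj]; omega
  have hlle : ∀ j < q, l j ≤ t0 := fun j hj => by
    rw [hlv j (lt_of_lt_of_le hj hqr)]
    have := Stmt9Aux.idx_getD_lt Q ht0Q (hq ▸ hj)
    omega
  have hugt : ∀ j, p ≤ j → j < r → t0 < u j := fun j h1 h2 => by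
    rw [huv j h2]
    have := Stmt9Aux.idx_getD_ge P ht0P (hp ▸ h1) (by rw [hLP.northP]; exact h2)
    omega
  have hlmono : ∀ j j', j < j' → j' < r → l j < l j' := fun j j' h h' => by
    rw [hlv j (lt_trans h h'), hlv j' h']
    have := Stmt9Aux.idx_strictMono Q h (by rw [hLP.northQ]; exact h')
    omega
  have humono : ∀ j j', j < j' → j' < r → u j < u j' := fun j j' h h' => by
    rw [huv j (lt_trans h h'), huv j' h']
    have := Stmt9Aux.idx_strictMono P h (by rw [hLP.northP]; exact h')
    omega
  have hlmono' : ∀ j j', j ≤ j' → j' < r → l j ≤ l j' := fun j j' h h' => by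
    rcases eq_or_lt_of_le h with rfl | hlt
    · exact le_rfl
    · exact le_of_lt (hlmono j j' hlt h')
  have humono' : ∀ j j', j ≤ j' → j' < r → u j ≤ u j' := fun j j' h h' => by
    rcases eq_or_lt_of_le h with rfl | hlt
    · exact le_rfl
    · exact le_of_lt (humono j j' hlt h')
  have hlinj : ∀ j j', j < r → j' < r → l j = l j' → j = j' := by
    intro j j' hj hj' he
    by_contra hne
    rcases lt_or_gt_of_ne hne with h | h
    · exact absurd he (ne_of_lt (hlmono j j' h hj'))
    · exact absurd he.symm (ne_of_lt (hlmono j' j h hj))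
  have huinj : ∀ j j', j < r → j' < r → u j = u j' → j = j' := by
    intro j j' hj hj' he
    by_contra hne
    rcases lt_or_gt_of_ne hne with h | h
    · exact absurd he (ne_of_lt (humono j j' h hj'))
    · exact absurd he.symm (ne_of_lt (humono j' j h hj))
  have hlu : ∀ j < r, l j ≤ u j := by
    intro j hj
    have ha := Stmt9Aux.idx_getD_lt_length P (by rw [hLP.northP]; exact hj)
    set a := (Stmt9Aux.idx P).getD j 0 with hadef
    have h2 : j < nCount (P.take (a + 1)) := by
      by_contra hcon
      have := Stmt9Aux.idx_getD_ge P (show a + 1 ≤ P.length from ha)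
        (not_lt.1 hcon) (by rw [hLP.northP]; exact hj)
      omega
    have h3 : j < nCount (Q.take (a + 1)) := lt_of_lt_of_le h2 (hLP.notAbove (a + 1))
    have h4 := Stmt9Aux.idx_getD_lt Q
      (show a + 1 ≤ Q.length by rw [hLP.lenQ]; rw [hLP.lenP] at ha; omega) h3
    rw [hlv j hj, huv j hj]
    omega
  -- the sets
  set Sl : Set ℕ := l '' Set.Ico p q with hSldef
  set Su : Set ℕ := u '' Set.Ico p q with hSudef
  set S : Set ℕ := Sl ∪ Su with hSdef
  set Cs : Set ℕ := (l '' Set.Iio p) ∪ (u '' Set.Ico q r) with hCsdef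
  set D : Set ℕ := M.E \ (Cs ∪ S) with hDdef
  have hSlval : ∀ x ∈ Sl, 1 ≤ x ∧ x ≤ t0 := by
    rintro x ⟨j, hj, rfl⟩
    exact ⟨hl1 j (lt_of_lt_of_le hj.2 hqr), hlle j hj.2⟩
  have hSuval : ∀ x ∈ Su, t0 < x ∧ x ≤ n := by
    rintro x ⟨j, hj, rfl⟩
    exact ⟨hugt j hj.1 (lt_of_lt_of_le hj.2 hqr), hun j (lt_of_lt_of_le hj.2 hqr)⟩
  have hClval : ∀ x ∈ l '' Set.Iio p, 1 ≤ x ∧ x ≤ t0 := by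
    rintro x ⟨j, hj, rfl⟩
    have hjq : j < q := lt_of_lt_of_le hj hpq
    exact ⟨hl1 j (lt_of_lt_of_le hjq hqr), hlle j hjq⟩
  have hCuval : ∀ x ∈ u '' Set.Ico q r, t0 < x ∧ x ≤ n := by
    rintro x ⟨j, hj, rfl⟩
    exact ⟨hugt j (le_trans hpq hj.1) hj.2, hun j hj.2⟩
  have hEmem : ∀ x, 1 ≤ x → x ≤ n → x ∈ M.E := by
    intro x h1 h2; rw [hground]; exact ⟨h1, h2⟩
  have ht0n : t0 ≤ n := min_le_right _ _
  have hSsub : S ⊆ M.E := by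
    rintro x (hx | hx)
    · exact hEmem x (hSlval x hx).1 (le_trans (hSlval x hx).2 ht0n)
    · exact hEmem x (le_trans (by omega) (hSuval x hx).1) (hSuval x hx).2
  have hCsub : Cs ⊆ M.E := by
    rintro x (hx | hx)
    · exact hEmem x (hClval x hx).1 (le_trans (hClval x hx).2 ht0n)
    · exact hEmem x (le_trans (by omega) (hCuval x hx).1) (hCuval x hx).2
  have hSC : Disjoint S Cs := by
    rw [Set.disjoint_left]
    rintro x (⟨j, hj, rfl⟩ | ⟨j, hj, rfl⟩) (⟨j', hj', hx⟩ | ⟨j', hj', hx⟩)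
    · have h3 : j' < p := hj'
      have h4 : p ≤ j := hj.1
      have := hlinj j' j (lt_of_lt_of_le (lt_of_lt_of_le hj' hpq) hqr)
        (lt_of_lt_of_le hj.2 hqr) hx
      omega
    · have h1 := hlle j hj.2
      have h2 := hugt j' (le_trans hpq hj'.1) hj'.2
      exact absurd hx (Nat.ne_of_gt (lt_of_le_of_lt h1 h2))
    · have h1 := hugt j hj.1 (lt_of_lt_of_le hj.2 hqr)
      have h2 := hlle j' (lt_of_lt_of_le hj' hpq)
      exact absurd hx (Nat.ne_of_lt (lt_of_le_of_lt h2 h1))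
    · have h3 : q ≤ j' := hj'.1
      have h4 : j < q := hj.2
      have := huinj j' j hj'.2 (lt_of_lt_of_le hj.2 hqr) hx
      omega
  have hSlSu : Disjoint Sl Su := by
    rw [Set.disjoint_left]
    intro x hx1 hx2
    have := (hSlval x hx1).2
    have := (hSuval x hx2).1
    omega
  have hrestr : (M.E \ Cs) \ D = S := by
    ext x
    constructor
    · rintro ⟨⟨hxE, hxC⟩, hxD⟩
      by_contra hxS
      exact hxD ⟨hxE, fun h => h.elim hxC hxS⟩
    · intro hxS
      exact ⟨⟨hSsub hxS, Set.disjoint_left.1 hSC hxS⟩, fun hD => hD.2 (Or.inr hxS)⟩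
  -- the key transversal construction
  have key : ∀ X ⊆ S, X.ncard ≤ k → M.Indep (X ∪ Cs) := by
    intro X hXS hXk
    rw [hindep]
    refine ⟨Set.union_subset (hXS.trans hSsub) hCsub, ?_⟩
    set Jl : Set ℕ := {j | (p ≤ j ∧ j < q) ∧ l j ∈ X} with hJldef
    set Ju : Set ℕ := {j | (p ≤ j ∧ j < q) ∧ u j ∈ X} with hJudef
    have hJlsub : Jl ⊆ Set.Ico p q := fun j hj => ⟨hj.1.1, hj.1.2⟩
    have hJusub : Ju ⊆ Set.Ico p q := fun j hj => ⟨hj.1.1, hj.1.2⟩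
    have hJlfin : Jl.Finite := (Set.finite_Ico p q).subset hJlsub
    have hJufin : Ju.Finite := (Set.finite_Ico p q).subset hJusub
    set a := Jl.ncard with hadef
    set b := Ju.ncard with hbdef
    have hIcoN : ∀ x y : ℕ, (Set.Ico x y).ncard = y - x := fun x y => by
      rw [← Finset.coe_Ico, Set.ncard_coe_finset, Nat.card_Ico]
    have hXeq : X = (l '' Jl) ∪ (u '' Ju) := by
      ext x
      constructor
      · intro hx
        rcases hXS hx with ⟨j, hj, rfl⟩ | ⟨j, hj, rfl⟩
        · exact Or.inl ⟨j, ⟨⟨hj.1, hj.2⟩, hx⟩, rfl⟩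
        · exact Or.inr ⟨j, ⟨⟨hj.1, hj.2⟩, hx⟩, rfl⟩
      · rintro (⟨j, hj, rfl⟩ | ⟨j, hj, rfl⟩)
        · exact hj.2
        · exact hj.2
    have hab : a + b ≤ k := by
      have hd : Disjoint (l '' Jl) (u '' Ju) := by
        rw [Set.disjoint_left]
        rintro x ⟨j, hj, rfl⟩ ⟨j', hj', hx⟩
        have h1 := hlle j hj.1.2
        have h2 := hugt j' hj'.1.1 (lt_of_lt_of_le hj'.1.2 hqr)
        omega
      have h1 : X.ncard = a + b := by
        rw [hXeq, Set.ncard_union_eq hd (hJlfin.image l) (hJufin.image u),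
          Set.ncard_image_of_injOn, Set.ncard_image_of_injOn]
        · intro j hj j' hj' he
          exact huinj j j' (lt_of_lt_of_le hj.1.2 hqr) (lt_of_lt_of_le hj'.1.2 hqr) he
        · intro j hj j' hj' he
          exact hlinj j j' (lt_of_lt_of_le hj.1.2 hqr) (lt_of_lt_of_le hj'.1.2 hqr) he
      omega
    set invl : ℕ → ℕ := fun x => sInf {j | j < r ∧ l j = x} with hinvldef
    set invu : ℕ → ℕ := fun x => sInf {j | j < r ∧ u j = x} with hinvudef
    have hinvl : ∀ j < r, invl (l j) = j := by
      intro j hj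
      have hset : {j' | j' < r ∧ l j' = l j} = {j} := by
        ext j'
        simp only [Set.mem_setOf_eq, Set.mem_singleton_iff]
        constructor
        · rintro ⟨hj', he⟩; exact hlinj j' j hj' hj he
        · rintro rfl; exact ⟨hj, rfl⟩
      rw [hinvldef]; simp only; rw [hset, csInf_singleton]
    have hinvu : ∀ j < r, invu (u j) = j := by
      intro j hj
      have hset : {j' | j' < r ∧ u j' = u j} = {j} := by
        ext j'
        simp only [Set.mem_setOf_eq, Set.mem_singleton_iff]
        constructor
        · rintro ⟨hj', he⟩; exact huinj j' j hj' hj he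
        · rintro rfl; exact ⟨hj, rfl⟩
      rw [hinvudef]; simp only; rw [hset, csInf_singleton]
    set f : ℕ → ℕ := fun x =>
      if x ≤ t0 then
        (if invl x < p then invl x else p + (Jl ∩ Set.Iio (invl x)).ncard)
      else
        (if q ≤ invu x then invu x else (q - 1) - (Ju ∩ Set.Ioi (invu x)).ncard)
      with hfdef
    have hdesc : ∀ x ∈ X ∪ Cs,
        (∃ j, j < p ∧ x = l j ∧ f x = j) ∨
        (∃ j, j ∈ Jl ∧ x = l j ∧ f x = p + (Jl ∩ Set.Iio j).ncard) ∨
        (∃ j, j ∈ Ju ∧ x = u j ∧ f x = (q - 1) - (Ju ∩ Set.Ioi j).ncard) ∨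
        (∃ j, q ≤ j ∧ j < r ∧ x = u j ∧ f x = j) := by
      rintro x (hxX | ⟨j, hj, rfl⟩ | ⟨j, hj, rfl⟩)
      · rcases hXS hxX with ⟨j, hj, rfl⟩ | ⟨j, hj, rfl⟩
        · refine Or.inr (Or.inl ⟨j, ⟨⟨hj.1, hj.2⟩, hxX⟩, rfl, ?_⟩)
          rw [hfdef]; simp only
          rw [if_pos (hlle j hj.2), hinvl j (lt_of_lt_of_le hj.2 hqr),
            if_neg (not_lt.2 hj.1)]
        · refine Or.inr (Or.inr (Or.inl ⟨j, ⟨⟨hj.1, hj.2⟩, hxX⟩, rfl, ?_⟩))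
          rw [hfdef]; simp only
          rw [if_neg (not_le.2 (hugt j hj.1 (lt_of_lt_of_le hj.2 hqr))),
            hinvu j (lt_of_lt_of_le hj.2 hqr), if_neg (not_le.2 hj.2)]
      · refine Or.inl ⟨j, hj, rfl, ?_⟩
        rw [hfdef]; simp only
        rw [if_pos (hlle j (lt_of_lt_of_le hj hpq)),
          hinvl j (lt_of_lt_of_le (lt_of_lt_of_le hj hpq) hqr), if_pos (show j < p from hj)]
      · refine Or.inr (Or.inr (Or.inr ⟨j, hj.1, hj.2, rfl, ?_⟩))
        rw [hfdef]; simp only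
        rw [if_neg (not_le.2 (hugt j (le_trans hpq hj.1) hj.2)),
          hinvu j hj.2, if_pos hj.1]
    -- numeric bounds in each case
    have hb2 : ∀ j ∈ Jl, (Jl ∩ Set.Iio j).ncard < a ∧ (Jl ∩ Set.Iio j).ncard ≤ j - p := by
      intro j hj
      constructor
      · refine Set.ncard_lt_ncard ?_ hJlfin
        rw [Set.ssubset_iff_of_subset Set.inter_subset_left]
        exact ⟨j, hj, fun hmem => absurd hmem.2 (by simp)⟩
      · have hsub : Jl ∩ Set.Iio j ⊆ Set.Ico p j := fun x hx => ⟨(hJlsub hx.1).1, hx.2⟩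
        have := Set.ncard_le_ncard hsub (Set.finite_Ico p j)
        rw [hIcoN] at this
        exact this
    have hb3 : ∀ j ∈ Ju, (Ju ∩ Set.Ioi j).ncard ≤ b - 1 ∧ (Ju ∩ Set.Ioi j).ncard ≤ (q - 1) - j
        ∧ 1 ≤ b := by
      intro j hj
      have hb1 : 1 ≤ b := by
        rw [hbdef]
        exact Set.ncard_pos hJufin |>.2 ⟨j, hj⟩
      refine ⟨?_, ?_, hb1⟩
      · have hsub : Ju ∩ Set.Ioi j ⊆ Ju \ {j} := fun x hx =>
          ⟨hx.1, fun hm => by have h2 : j < x := hx.2; simp only [Set.mem_singleton_iff] at hm; omega⟩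
        have h1 := Set.ncard_le_ncard hsub (hJufin.subset Set.diff_subset)
        rw [Set.ncard_diff_singleton_of_mem hj] at h1
        exact h1
      · have hsub : Ju ∩ Set.Ioi j ⊆ Set.Ico (j + 1) q := fun x hx =>
          ⟨hx.2, (hJusub hx.1).2⟩
        have := Set.ncard_le_ncard hsub (Set.finite_Ico _ _)
        rw [hIcoN] at this
        omega
    have hlt2 : ∀ j j', j ∈ Jl → j' ∈ Jl → j < j' →
        (Jl ∩ Set.Iio j).ncard < (Jl ∩ Set.Iio j').ncard := by
      intro j j' hj hj' hlt
      refine Set.ncard_lt_ncard ?_ (hJlfin.subset Set.inter_subset_left)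
      rw [Set.ssubset_iff_of_subset
        (Set.inter_subset_inter_right _ (Set.Iio_subset_Iio (le_of_lt hlt)))]
      exact ⟨j, ⟨hj, hlt⟩, fun hmem => absurd hmem.2 (by simp)⟩
    have hlt3 : ∀ j j', j ∈ Ju → j' ∈ Ju → j < j' →
        (Ju ∩ Set.Ioi j').ncard < (Ju ∩ Set.Ioi j).ncard := by
      intro j j' hj hj' hlt
      refine Set.ncard_lt_ncard ?_ (hJufin.subset Set.inter_subset_left)
      rw [Set.ssubset_iff_of_subset
        (Set.inter_subset_inter_right _ (Set.Ioi_subset_Ioi hlt.le))]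
      exact ⟨j', ⟨hj', hlt⟩, fun hmem => absurd hmem.2 (by simp)⟩
    have hrange : ∀ x ∈ X ∪ Cs, f x < r ∧ l (f x) ≤ x ∧ x ≤ u (f x) := by
      intro x hx
      rcases hdesc x hx with ⟨j, hj1, rfl, hfx⟩ | ⟨j, hj, rfl, hfx⟩ |
        ⟨j, hj, rfl, hfx⟩ | ⟨j, hj1, hj2, rfl, hfx⟩
      · rw [hfx]
        have hjr : j < r := lt_of_lt_of_le (lt_of_lt_of_le hj1 hpq) hqr
        exact ⟨hjr, le_rfl, hlu j hjr⟩
      · rw [hfx]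
        obtain ⟨hc1, hc2⟩ := hb2 j hj
        have hjq : j < q := hj.1.2
        have hjp : p ≤ j := hj.1.1
        have he1 : p + (Jl ∩ Set.Iio j).ncard ≤ j := by omega
        have hjr : j < r := lt_of_lt_of_le hjq hqr
        have her : p + (Jl ∩ Set.Iio j).ncard < r := lt_of_le_of_lt he1 hjr
        refine ⟨her, hlmono' _ j he1 hjr, ?_⟩
        have := hugt (p + (Jl ∩ Set.Iio j).ncard) (by omega) her
        have := hlle j hjq
        omega
      · rw [hfx]
        obtain ⟨hc1, hc2, hb1⟩ := hb3 j hj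
        have hjq : j < q := hj.1.2
        have hjp : p ≤ j := hj.1.1
        set e := (q - 1) - (Ju ∩ Set.Ioi j).ncard with hedef
        have he1 : j ≤ e := by omega
        have he2 : e < q := by omega
        have her : e < r := lt_of_lt_of_le he2 hqr
        refine ⟨her, ?_, humono' j e he1 her⟩
        have := hlle e he2
        have := hugt j hjp (lt_of_lt_of_le hjq hqr)
        omega
      · rw [hfx]
        exact ⟨hj2, hlu j hj2, le_rfl⟩
    have hinj : Set.InjOn f (X ∪ Cs) := by
      intro x hx y hy hxy
      have hpab : p + a + b ≤ q := by omega
      rcases hdesc x hx with ⟨j, hj1, hxe, hfx⟩ | ⟨j, hj, hxe, hfx⟩ |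
        ⟨j, hj, hxe, hfx⟩ | ⟨j, hj1, hj2, hxe, hfx⟩ <;>
        rcases hdesc y hy with ⟨j', hj1', hye, hfy⟩ | ⟨j', hj', hye, hfy⟩ |
          ⟨j', hj', hye, hfy⟩ | ⟨j', hj1', hj2', hye, hfy⟩
      -- case 1-1
      · rw [hxe, hye]; rw [hfx, hfy] at hxy; rw [hxy]
      -- 1-2
      · exfalso
        obtain ⟨hc1', hc2'⟩ := hb2 j' hj'
        rw [hfx, hfy] at hxy; omega
      -- 1-3
      · exfalso
        obtain ⟨hc1', hc2', hb1'⟩ := hb3 j' hj'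
        have := hj'.1.2
        rw [hfx, hfy] at hxy; omega
      -- 1-4
      · exfalso; rw [hfx, hfy] at hxy; omega
      -- 2-1
      · exfalso
        obtain ⟨hc1, hc2⟩ := hb2 j hj
        rw [hfx, hfy] at hxy; omega
      -- 2-2
      · rw [hfx, hfy] at hxy
        have hjj : j = j' := by
          by_contra hne
          rcases lt_or_gt_of_ne hne with h | h
          · have := hlt2 j j' hj hj' h; omega
          · have := hlt2 j' j hj' hj h; omega
        rw [hxe, hye, hjj]
      -- 2-3
      · exfalso
        obtain ⟨hc1, hc2⟩ := hb2 j hj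
        obtain ⟨hc1', hc2', hb1'⟩ := hb3 j' hj'
        have := hj'.1.2
        rw [hfx, hfy] at hxy; omega
      -- 2-4
      · exfalso
        obtain ⟨hc1, hc2⟩ := hb2 j hj
        rw [hfx, hfy] at hxy; omega
      -- 3-1
      · exfalso
        obtain ⟨hc1, hc2, hb1⟩ := hb3 j hj
        have := hj.1.2
        rw [hfx, hfy] at hxy; omega
      -- 3-2
      · exfalso
        obtain ⟨hc1, hc2, hb1⟩ := hb3 j hj
        obtain ⟨hc1', hc2'⟩ := hb2 j' hj'
        have := hj.1.2
        rw [hfx, hfy] at hxy; omega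
      -- 3-3
      · rw [hfx, hfy] at hxy
        obtain ⟨hc1, hc2, hb1⟩ := hb3 j hj
        obtain ⟨hc1', hc2', -⟩ := hb3 j' hj'
        have hq1 : j < q := hj.1.2
        have hq1' : j' < q := hj'.1.2
        have hjj : j = j' := by
          by_contra hne
          rcases lt_or_gt_of_ne hne with h | h
          · have := hlt3 j j' hj hj' h; omega
          · have := hlt3 j' j hj' hj h; omega
        rw [hxe, hye, hjj]
      -- 3-4
      · exfalso
        obtain ⟨hc1, hc2, hb1⟩ := hb3 j hj
        have := hj.1.2
        rw [hfx, hfy] at hxy; omega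
      -- 4-1
      · exfalso; rw [hfx, hfy] at hxy; omega
      -- 4-2
      · exfalso
        obtain ⟨hc1', hc2'⟩ := hb2 j' hj'
        rw [hfx, hfy] at hxy; omega
      -- 4-3
      · exfalso
        obtain ⟨hc1', hc2', hb1'⟩ := hb3 j' hj'
        have := hj'.1.2
        rw [hfx, hfy] at hxy; omega
      -- 4-4
      · rw [hxe, hye]; rw [hfx, hfy] at hxy; rw [hxy]
    exact ⟨f, hinj, fun x hx => hrange x hx⟩
  have hCsIndep : M.Indep Cs := by
    have h := key ∅ (Set.empty_subset _) (by simp)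
    rwa [Set.empty_union] at h
  have hIcoE : ∀ x y : ℕ, (Set.Ico x y).encard = ((y - x : ℕ) : ℕ∞) := fun x y => by
    rw [← Finset.coe_Ico, Set.encard_coe_eq_coe_finsetCard, Nat.card_Ico]
  have hIioE : ∀ x : ℕ, (Set.Iio x).encard = (x : ℕ∞) := fun x => by
    have : Set.Iio x = ↑(Finset.range x) := by ext y; simp
    rw [this, Set.encard_coe_eq_coe_finsetCard, Finset.card_range]
  refine ⟨((M✶ ↾ (M.E \ Cs))✶) ↾ ((M.E \ Cs) \ D), ⟨Cs, D, hCsub, Set.diff_subset, ?_, rfl⟩, ?_⟩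
  · exact Set.disjoint_left.2 fun x hx hxD => hxD.2 (Or.inl hx)
  rw [hrestr]
  constructor
  · -- ground set cardinality
    rw [Matroid.restrict_ground_eq]
    have hSl : Sl.encard = (k : ℕ∞) := by
      rw [hSldef, Set.InjOn.encard_image, hIcoE]
      · congr 1; omega
      · intro j hj j' hj' he
        exact hlinj j j' (lt_of_lt_of_le hj.2 hqr) (lt_of_lt_of_le hj'.2 hqr) he
    have hSu : Su.encard = (k : ℕ∞) := by
      rw [hSudef, Set.InjOn.encard_image, hIcoE]
      · congr 1; omega
      · intro j hj j' hj' he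
        exact huinj j j' (lt_of_lt_of_le hj.2 hqr) (lt_of_lt_of_le hj'.2 hqr) he
    rw [hSdef, Set.encard_union_eq hSlSu, hSl, hSu]
    push_cast
    ring
  · intro X hXS'
    rw [Matroid.restrict_ground_eq] at hXS'
    rw [Matroid.restrict_indep_iff,
      Stmt9Aux.dual_restrict_dual_indep_iff hCsIndep (hXS'.trans hSsub)
        (Set.disjoint_of_subset_left hXS' hSC)]
    constructor
    · rintro ⟨hind, -⟩
      rw [hindep] at hind
      obtain ⟨-, g, hginj, hgcond⟩ := hind
      have hXfin : X.Finite := ((Set.finite_Ico p q).image l |>.union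
        ((Set.finite_Ico p q).image u)).subset hXS'
      have h1 : (X ∪ Cs).encard ≤ (r : ℕ∞) := by
        calc (X ∪ Cs).encard = (g '' (X ∪ Cs)).encard := (hginj.encard_image).symm
          _ ≤ (Set.Iio r).encard := by
              refine Set.encard_mono ?_
              rintro y ⟨x, hx, rfl⟩
              exact (hgcond x hx).1
          _ = (r : ℕ∞) := hIioE r
      have hCenc : Cs.encard = ((p + (r - q) : ℕ) : ℕ∞) := by
        have hd : Disjoint (l '' Set.Iio p) (u '' Set.Ico q r) := by
          rw [Set.disjoint_left]
          intro x hx1 hx2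
          have := (hClval x hx1).2
          have := (hCuval x hx2).1
          omega
        rw [hCsdef, Set.encard_union_eq hd, Set.InjOn.encard_image,
          Set.InjOn.encard_image, hIioE, hIcoE]
        · push_cast [Nat.cast_sub hqr]; ring_nf
        · intro j hj j' hj' he
          exact huinj j j' hj.2 hj'.2 he
        · intro j hj j' hj' he
          exact hlinj j j' (lt_of_lt_of_le (lt_of_lt_of_le hj hpq) hqr)
            (lt_of_lt_of_le (lt_of_lt_of_le hj' hpq) hqr) he
      rw [Set.encard_union_eq (Set.disjoint_of_subset_left hXS' hSC), hCenc] at h1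
      have hr' : (r : ℕ∞) = ((k : ℕ) : ℕ∞) + ((p + (r - q) : ℕ) : ℕ∞) := by
        rw [← Nat.cast_add]
        congr 1
        omega
      rw [hr'] at h1
      exact (WithTop.add_le_add_iff_right (by
        exact_mod_cast WithTop.natCast_ne_top _)).1 h1
    · intro hXk
      refine ⟨key X hXS' ?_, hXS'⟩
      exact (Set.encard_le_coe_iff_finite_ncard_le.1 hXk).2
end

section
/- If M = M[P,Q] is a lattice path matroid with branch-width at most k, then the square-width of the presentation [P,Q] is strictly less than ⌈3k/2⌉. -/
open Matroid

namespace Aux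

def F (w : List Bool) : List ℕ := (List.range w.length).filter (fun j => w.getD j false)

theorem countP_range (w : List Bool) :
    (List.range w.length).countP (fun j => w.getD j false) = nCount w := by
  induction w with
  | nil => simp [nCount]
  | cons b t ih =>
    rw [List.length_cons, List.range_succ_eq_map, List.countP_cons, List.countP_map]
    have : ((fun j => (b :: t).getD j false) ∘ (· + 1)) = (fun j => t.getD j false) := by
      funext j; simp
    rw [this, ih]
    cases b <;> simp [nCount, List.count_cons] <;> omega

theorem lenF (w : List Bool) : (F w).length = nCount w := by
  rw [F, ← List.countP_eq_length_filter, countP_range]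

theorem aux_min (pr : ℕ → Bool) (p : ℕ) : ∀ n,
    (List.range n).countP (fun j => decide (j < p) && pr j) = (List.range (min p n)).countP pr := by
  intro n
  induction n with
  | zero => simp
  | succ n ih =>
    rw [List.range_succ, List.countP_append, ih]
    by_cases h : n < p
    · have h1 : min p (n+1) = min p n + 1 := by omega
      have h2 : min p n = n := by omega
      rw [h1, List.range_succ, List.countP_append, h2]
      simp [List.countP_cons, h]
    · have h1 : min p (n+1) = min p n := by omega
      simp [h, h1]

theorem countP_take (w : List Bool) (p : ℕ) :
    nCount (w.take p) = (F w).countP (fun j => decide (j < p)) := by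
  have h1 : nCount (w.take p) = (List.range (w.take p).length).countP
      (fun j => (w.take p).getD j false) := (countP_range _).symm
  rw [h1, List.length_take]
  have h2 : (List.range (min p w.length)).countP (fun j => (w.take p).getD j false)
      = (List.range (min p w.length)).countP (fun j => w.getD j false) := by
    apply List.countP_congr
    intro j hj
    rw [List.mem_range] at hj
    have : j < p := by omega
    simp [List.getD, List.getElem?_take, this]
  rw [h2, F, List.countP_filter, ← aux_min]

theorem sorted_get_lt_iff_countP {l : List ℕ} (hl : l.Pairwise (· < ·)) (p : ℕ) :
    ∀ j (hj : j < l.length), (l[j] < p ↔ j < l.countP (fun a => decide (a < p))) := by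
  induction l with
  | nil => intro j hj; simp at hj
  | cons x t ih =>
    rw [List.pairwise_cons] at hl
    obtain ⟨hx, ht⟩ := hl
    intro j hj
    rw [List.countP_cons]
    by_cases hxp : x < p
    · have hx' : (decide (x < p)) = true := by simpa using hxp
      rw [hx', if_pos rfl]
      rcases j with _ | j
      · simp only [List.getElem_cons_zero]
        constructor
        · intro _; omega
        · intro _; exact hxp
      · have hj' : j < t.length := by simpa using hj
        simp only [List.getElem_cons_succ]
        rw [ih ht j hj']
        omega
    · have hz : t.countP (fun a => decide (a < p)) = 0 := by
        rw [List.countP_eq_zero]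
        intro a ha
        have := hx a ha
        simp only [decide_eq_true_eq]
        omega
      have hx' : (decide (x < p)) = false := by simpa using hxp
      rw [hx', if_neg (by simp), hz]
      rcases j with _ | j
      · simp only [List.getElem_cons_zero]
        constructor
        · intro h; exact absurd h hxp
        · intro h; omega
      · have hj' : j < t.length := by simpa using hj
        simp only [List.getElem_cons_succ]
        constructor
        · intro h
          have : t[j] > x := hx _ (List.getElem_mem _)
          omega
        · intro h; omega

theorem F_pairwise (w : List Bool) : (F w).Pairwise (· < ·) :=
  List.pairwise_lt_range.filter _

theorem np_getD (w : List Bool) (j : ℕ) (hj : j < nCount w) :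
    (northPositions w).getD j 0 = (F w)[j]'(by rw [lenF]; exact hj) + 1 := by
  have hlen : j < (F w).length := by rw [lenF]; exact hj
  have hlen2 : j < (northPositions w).length := by
    rw [northPositions, List.length_map]; exact hlen
  rw [List.getD_eq_getElem _ _ hlen2]
  simp only [northPositions, List.getElem_map]
  rfl

theorem np_le_iff (w : List Bool) (j : ℕ) (hj : j < nCount w) (p : ℕ) :
    (northPositions w).getD j 0 ≤ p ↔ j < nCount (w.take p) := by
  rw [np_getD w j hj, countP_take]
  have hlen : j < (F w).length := by rw [lenF]; exact hj
  have := sorted_get_lt_iff_countP (F_pairwise w) p j hlen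
  omega

theorem np_pos (w : List Bool) (j : ℕ) (hj : j < nCount w) :
    1 ≤ (northPositions w).getD j 0 := by
  rw [np_getD w j hj]; omega

theorem np_le_len (w : List Bool) (j : ℕ) (hj : j < nCount w) :
    (northPositions w).getD j 0 ≤ w.length := by
  rw [np_getD w j hj]
  have hlen : j < (F w).length := by rw [lenF]; exact hj
  have hmem : (F w)[j] ∈ F w := List.getElem_mem _
  have : (F w)[j] < w.length := List.mem_range.1 (List.mem_of_mem_filter hmem)
  omega

theorem np_mono (w : List Bool) (j j' : ℕ) (hjj : j < j') (hj' : j' < nCount w) :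
    (northPositions w).getD j 0 < (northPositions w).getD j' 0 := by
  have h1 : j < nCount w := lt_trans hjj hj'
  rw [np_getD w j h1, np_getD w j' hj']
  have hlen : j' < (F w).length := by rw [lenF]; exact hj'
  have := (List.pairwise_iff_get.1 (F_pairwise w)) ⟨j, by omega⟩ ⟨j', hlen⟩ (by simpa using hjj)
  simp only [List.get_eq_getElem] at this
  omega

theorem nCount_take_le (w : List Bool) (p : ℕ) : nCount (w.take p) ≤ nCount w :=
  List.Sublist.count_le _ (List.take_sublist _ _)

end Aux

namespace Aux
open Matroid

theorem le_eRk {α : Type*} {M : Matroid α} {I A : Set α} (hI : M.Indep I) (hIA : I ⊆ A) :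
    I.encard ≤ _root_.eRk M A := le_iSup (fun I : {I : Set α // M.Indep I ∧ I ⊆ A} => (I : Set α).encard)
      ⟨I, hI, hIA⟩

theorem eRk_le {α : Type*} {M : Matroid α} {A : Set α} {b : ℕ∞}
    (h : ∀ I, M.Indep I → I ⊆ A → I.encard ≤ b) : _root_.eRk M A ≤ b :=
  iSup_le fun I => h I I.2.1 I.2.2

theorem eRk_basis {α : Type*} {M : Matroid α} {J A : Set α} (hJ : M.IsBasis J A) :
    _root_.eRk M A = J.encard := by
  apply le_antisymm
  · apply eRk_le
    intro I hI hIA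
    obtain ⟨J', hJ', hIJ'⟩ := hI.subset_isBasis_of_subset hIA hJ.subset_ground
    calc I.encard ≤ J'.encard := Set.encard_mono hIJ'
    _ = J.encard := hJ'.encard_eq_encard hJ
  · exact le_eRk hJ.indep hJ.subset

theorem eRk_submod {α : Type*} {M : Matroid α} {A C : Set α} (hA : A ⊆ M.E) (hC : C ⊆ M.E) :
    _root_.eRk M (A ∪ C) + _root_.eRk M (A ∩ C) ≤ _root_.eRk M A + _root_.eRk M C := by
  obtain ⟨I, hI⟩ := M.exists_isBasis (A ∩ C) ((Set.inter_subset_left).trans hA)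
  obtain ⟨J, hJ, hIJ⟩ := hI.indep.subset_isBasis_of_subset
    (hI.subset.trans (Set.inter_subset_left.trans Set.subset_union_left)) (Set.union_subset hA hC)
  rw [eRk_basis hJ, eRk_basis hI]
  have key : (J ∩ A).encard + (J ∩ C).encard = ((J ∩ A) ∪ (J ∩ C)).encard
      + ((J ∩ A) ∩ (J ∩ C)).encard := (Set.encard_union_add_encard_inter _ _).symm
  have h1 : (J ∩ A) ∪ (J ∩ C) = J := by
    rw [← Set.inter_union_distrib_left]
    exact Set.inter_eq_self_of_subset_left hJ.subset
  have h2 : I ⊆ (J ∩ A) ∩ (J ∩ C) := by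
    intro x hx
    exact ⟨⟨hIJ hx, (hI.subset hx).1⟩, hIJ hx, (hI.subset hx).2⟩
  calc J.encard + I.encard ≤ ((J ∩ A) ∪ (J ∩ C)).encard + ((J ∩ A) ∩ (J ∩ C)).encard := by
        rw [h1]; exact add_le_add le_rfl (Set.encard_mono h2)
  _ = (J ∩ A).encard + (J ∩ C).encard := key.symm
  _ ≤ _root_.eRk M A + _root_.eRk M C := add_le_add
      (le_eRk (hJ.indep.subset Set.inter_subset_left) Set.inter_subset_right)
      (le_eRk (hJ.indep.subset Set.inter_subset_left) Set.inter_subset_right)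

end Aux

namespace Aux

theorem self_mem_subtrees {α : Type*} (t : BTree α) : t ∈ t.subtrees := by
  cases t <;> simp [BTree.subtrees]

theorem leafList_sublist {α : Type*} : ∀ (t t' : BTree α), t' ∈ t.subtrees →
    t'.leafList.Sublist t.leafList := by
  intro t
  induction t with
  | leaf a =>
    intro t' ht'
    simp only [BTree.subtrees, List.mem_singleton] at ht'
    subst ht'
    exact List.Sublist.refl _
  | node l r ihl ihr =>
    intro t' ht'
    simp only [BTree.subtrees, List.mem_cons, List.mem_append] at ht'
    rcases ht' with h | h | h
    · subst h; exact List.Sublist.refl _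
    · exact (ihl t' h).trans (List.sublist_append_left _ _)
    · exact (ihr t' h).trans (List.sublist_append_right _ _)

theorem separator {α : Type*} (pred : α → Bool) (q : ℕ) (hq : 2 ≤ q) :
    ∀ (t : BTree α), q ≤ t.leafList.countP pred →
    ∃ t' ∈ t.subtrees, q ≤ t'.leafList.countP pred ∧ t'.leafList.countP pred ≤ 2*q - 2 := by
  intro t
  induction t with
  | leaf a =>
    intro h
    exfalso
    have : (BTree.leaf a).leafList.countP pred ≤ 1 := by
      simp [BTree.leafList, List.countP_cons]
      split <;> simp
    omega
  | node l r ihl ihr =>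
    intro h
    have hsum : (BTree.node l r).leafList.countP pred
        = l.leafList.countP pred + r.leafList.countP pred := by
      simp [BTree.leafList, List.countP_append]
    by_cases hl : q ≤ l.leafList.countP pred
    · obtain ⟨t', ht', h1, h2⟩ := ihl hl
      exact ⟨t', by simp [BTree.subtrees, List.mem_cons, List.mem_append]; tauto, h1, h2⟩
    · by_cases hr : q ≤ r.leafList.countP pred
      · obtain ⟨t', ht', h1, h2⟩ := ihr hr
        exact ⟨t', by simp [BTree.subtrees, List.mem_cons, List.mem_append]; tauto, h1, h2⟩
      · refine ⟨BTree.node l r, self_mem_subtrees _, h, ?_⟩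
        omega

end Aux

namespace Aux

theorem indep_core (M : Matroid ℕ) (P Q : List Bool) (m r : ℕ)
    (hE : M.E = Set.Icc 1 (m + r))
    (hInd : ∀ X : Set ℕ, M.Indep X ↔ X ⊆ M.E ∧ IsPartialTransversal P Q r X)
    (n s i : ℕ) (hns : n + s ≤ r)
    (Lg Ug : ℕ → ℕ)
    (hLgdef : ∀ j, Lg j = (northPositions Q).getD j 0)
    (hUgdef : ∀ j, Ug j = (northPositions P).getD j 0)
    (hLmono : ∀ ⦃j j'⦄, j < j' → j' < r → Lg j < Lg j')
    (hUmono : ∀ ⦃j j'⦄, j < j' → j' < r → Ug j < Ug j')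
    (hLbnd : ∀ j, j < r → 1 ≤ Lg j ∧ Lg j ≤ m + r)
    (hUbnd : ∀ j, j < r → 1 ≤ Ug j ∧ Ug j ≤ m + r)
    (hLi : ∀ j, j < n + s → Lg j ≤ i)
    (hUi : ∀ j, n ≤ j → j < r → i < Ug j)
    (hLU : ∀ j, j < r → Lg j ≤ Ug j)
    (JL JU : Finset ℕ) (hJL : ∀ j ∈ JL, n ≤ j ∧ j < n + s)
    (hJU : ∀ j ∈ JU, n ≤ j ∧ j < n + s) (hcard : JL.card + JU.card ≤ s) :
    M.Indep ((Lg '' (Set.Iio n ∪ ↑JL)) ∪ (Ug '' (Set.Ico (n + s) r ∪ ↑JU))) ∧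
    ((Lg '' (Set.Iio n ∪ ↑JL)) ∪ (Ug '' (Set.Ico (n + s) r ∪ ↑JU))).encard
      = ((n + (r - (n + s)) + JL.card + JU.card : ℕ) : ℕ∞) := by
  classical
  set DL : Set ℕ := Set.Iio n ∪ ↑JL with hDL
  set DU : Set ℕ := Set.Ico (n + s) r ∪ ↑JU with hDU
  -- basic facts about index domains
  have hDLlt : ∀ j ∈ DL, j < n + s := by
    intro j hj
    rcases hj with h | h
    · have : j < n := h; omega
    · exact (hJL j h).2
  have hDLr : ∀ j ∈ DL, j < r := fun j hj => lt_of_lt_of_le (hDLlt j hj) hns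
  have hDUn : ∀ j ∈ DU, n ≤ j := by
    intro j hj
    rcases hj with h | h
    · have := h.1; omega
    · exact (hJU j h).1
  have hDUr : ∀ j ∈ DU, j < r := by
    intro j hj
    rcases hj with h | h
    · exact h.2
    · exact lt_of_lt_of_le (hJU j h).2 hns
  have hLmono' : ∀ ⦃j j'⦄, j ≤ j' → j' < r → Lg j ≤ Lg j' := by
    intro j j' hle hj'
    rcases eq_or_lt_of_le hle with h | h
    · rw [h]
    · exact le_of_lt (hLmono h hj')
  have hUmono' : ∀ ⦃j j'⦄, j ≤ j' → j' < r → Ug j ≤ Ug j' := by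
    intro j j' hle hj'
    rcases eq_or_lt_of_le hle with h | h
    · rw [h]
    · exact le_of_lt (hUmono h hj')
  have hLinj : Set.InjOn Lg DL := by
    intro j hj j' hj' heq
    by_contra hne
    rcases lt_or_gt_of_ne hne with h | h
    · exact absurd heq (ne_of_lt (hLmono h (hDLr j' hj')))
    · exact absurd heq.symm (ne_of_lt (hLmono h (hDLr j hj)))
  have hUinj : Set.InjOn Ug DU := by
    intro j hj j' hj' heq
    by_contra hne
    rcases lt_or_gt_of_ne hne with h | h
    · exact absurd heq (ne_of_lt (hUmono h (hDUr j' hj')))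
    · exact absurd heq.symm (ne_of_lt (hUmono h (hDUr j hj)))
  have hLval : ∀ j ∈ DL, Lg j ≤ i := fun j hj => hLi j (hDLlt j hj)
  have hUval : ∀ j ∈ DU, i < Ug j := fun j hj => hUi j (hDUn j hj) (hDUr j hj)
  have hdisj : Disjoint (Lg '' DL) (Ug '' DU) := by
    rw [Set.disjoint_left]
    rintro x ⟨j, hj, rfl⟩ ⟨j', hj', heq⟩
    have := hLval j hj
    have := hUval j' hj'
    omega
  -- cardinality
  have hcardDL : DL.encard = ((n + JL.card : ℕ) : ℕ∞) := by
    rw [hDL]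
    have hd : Disjoint (Set.Iio n) (↑JL : Set ℕ) := by
      rw [Set.disjoint_left]
      intro j hj hj'
      have := (hJL j hj').1
      have : j < n := hj
      omega
    rw [Set.encard_union_eq hd, ← Finset.coe_range, Set.encard_coe_eq_coe_finsetCard,
      Set.encard_coe_eq_coe_finsetCard, Finset.card_range]
    push_cast
    ring
  have hcardDU : DU.encard = ((r - (n + s) + JU.card : ℕ) : ℕ∞) := by
    rw [hDU]
    have hd : Disjoint (Set.Ico (n + s) r) (↑JU : Set ℕ) := by
      rw [Set.disjoint_left]
      intro j hj hj'
      have := (hJU j hj').2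
      have : n + s ≤ j := hj.1
      omega
    rw [Set.encard_union_eq hd, ← Finset.coe_Ico, Set.encard_coe_eq_coe_finsetCard,
      Set.encard_coe_eq_coe_finsetCard, Nat.card_Ico]
    push_cast
    ring
  have hcardX : ((Lg '' DL) ∪ (Ug '' DU)).encard
      = ((n + (r - (n + s)) + JL.card + JU.card : ℕ) : ℕ∞) := by
    rw [Set.encard_union_eq hdisj, Set.InjOn.encard_image hLinj, Set.InjOn.encard_image hUinj,
      hcardDL, hcardDU]
    push_cast
    ring
  refine ⟨?_, hcardX⟩
  rw [hInd]
  constructor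
  · -- subset of ground set
    rintro x (⟨j, hj, rfl⟩ | ⟨j, hj, rfl⟩)
    · rw [hE]
      exact ⟨(hLbnd j (hDLr j hj)).1, (hLbnd j (hDLr j hj)).2⟩
    · rw [hE]
      exact ⟨(hUbnd j (hDUr j hj)).1, (hUbnd j (hDUr j hj)).2⟩
  · -- transversal
    set cL : ℕ → ℕ := fun j => (JL.filter (· < j)).card with hcL
    set cU : ℕ → ℕ := fun j => (JU.filter (fun j' => j < j')).card with hcU
    set gL : ℕ → ℕ := fun j => if j < n then j else n + cL j with hgL
    set gU : ℕ → ℕ := fun j => if n + s ≤ j then j else (n + s - 1) - cU j with hgU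
    set f : ℕ → ℕ := fun x => if x ≤ i then gL (Function.invFunOn Lg DL x)
      else gU (Function.invFunOn Ug DU x) with hf
    -- index counting facts
    have hcL_le : ∀ j ∈ JL, cL j ≤ j - n ∧ cL j < JL.card := by
      intro j hj
      constructor
      · have hsub : JL.filter (· < j) ⊆ Finset.Ico n j := by
          intro a ha
          rw [Finset.mem_filter] at ha
          rw [Finset.mem_Ico]
          exact ⟨(hJL a ha.1).1, by simpa using ha.2⟩
        have := Finset.card_le_card hsub
        rwa [Nat.card_Ico] at this
      · apply Finset.card_lt_card
        constructor
        · exact Finset.filter_subset _ _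
        · intro hsub
          have := hsub hj
          rw [Finset.mem_filter] at this
          omega
    have hcU_le : ∀ j ∈ JU, cU j ≤ (n + s - 1) - j ∧ cU j < JU.card := by
      intro j hj
      constructor
      · have hsub : JU.filter (fun j' => j < j') ⊆ Finset.Ioc j (n + s - 1) := by
          intro a ha
          rw [Finset.mem_filter] at ha
          rw [Finset.mem_Ioc]
          refine ⟨by simpa using ha.2, ?_⟩
          have := (hJU a ha.1).2
          omega
        have := Finset.card_le_card hsub
        rwa [Nat.card_Ioc] at this
      · apply Finset.card_lt_card
        constructor
        · exact Finset.filter_subset _ _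
        · intro hsub
          have := hsub hj
          rw [Finset.mem_filter] at this
          omega
    have hcL_mono : ∀ j ∈ JL, ∀ j' ∈ JL, j < j' → cL j < cL j' := by
      intro j hj j' hj' hlt
      apply Finset.card_lt_card
      constructor
      · intro a ha
        rw [Finset.mem_filter] at ha ⊢
        refine ⟨ha.1, ?_⟩
        have : a < j := by simpa using ha.2
        simp; omega
      · intro hsub
        have := hsub (by rw [Finset.mem_filter]; exact ⟨hj, by simp [hlt]⟩)
        rw [Finset.mem_filter] at this
        have : j < j := by simpa using this.2
        omega
    have hcU_mono : ∀ j ∈ JU, ∀ j' ∈ JU, j < j' → cU j' < cU j := by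
      intro j hj j' hj' hlt
      apply Finset.card_lt_card
      constructor
      · intro a ha
        rw [Finset.mem_filter] at ha ⊢
        refine ⟨ha.1, ?_⟩
        have : j' < a := by simpa using ha.2
        simp; omega
      · intro hsub
        have := hsub (by rw [Finset.mem_filter]; exact ⟨hj', by simp [hlt]⟩)
        rw [Finset.mem_filter] at this
        have : j' < j' := by simpa using this.2
        omega
    have hmemJL : ∀ j ∈ DL, ¬ j < n → j ∈ JL := by
      intro j hj hn
      rcases hj with h | h
      · exact absurd h hn
      · exact h
    have hmemJU : ∀ j ∈ DU, ¬ n + s ≤ j → j ∈ JU := by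
      intro j hj hn
      rcases hj with h | h
      · exact absurd h.1 hn
      · exact h
    -- gL and gU : bounds
    have hgL_le : ∀ j ∈ DL, gL j ≤ j ∧ gL j < n + JL.card + 1 ∧ gL j < n + s + 1 := by
      intro j hj
      rw [hgL]
      by_cases h : j < n
      · simp only [h, if_pos]
        omega
      · simp only [h, if_neg, if_false]
        have hjl := hmemJL j hj h
        have := hcL_le j hjl
        have := (hJL j hjl).1
        omega
    have hgU_ge : ∀ j ∈ DU, j ≤ gU j ∧ n + s - JU.card ≤ gU j + 1 ∧ gU j < r ∧ n ≤ gU j := by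
      intro j hj
      rw [hgU]
      by_cases h : n + s ≤ j
      · simp only [h, if_pos]
        exact ⟨le_refl _, by omega, hDUr j hj, hDUn j hj⟩
      · simp only [h, if_neg, if_false]
        have hju := hmemJU j hj h
        have h1 := hcU_le j hju
        have h2 := (hJU j hju)
        have h3 : 1 ≤ JU.card := Finset.card_pos.2 ⟨j, hju⟩
        constructor
        · omega
        refine ⟨by omega, by omega, by omega⟩
    -- gL and gU small vs large
    have hgLU : ∀ j ∈ DL, ∀ j' ∈ DU, gL j < gU j' := by
      intro j hj j' hj'
      have h1 := hgL_le j hj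
      have h2 := hgU_ge j' hj'
      have : JL.card + JU.card ≤ s := hcard
      -- gL j ≤ max(n-1, n + JL.card - 1) < n + s - JU.card ≤ gU j' ... careful
      rw [hgL] at h1 ⊢
      rw [hgU] at h2 ⊢
      by_cases h : j < n
      · by_cases h' : n + s ≤ j'
        · simp only [h, if_pos, h', if_pos]; omega
        · have hju := hmemJU j' hj' h'
          have := hcU_le j' hju
          have := hJU j' hju
          have h3 : 1 ≤ JU.card := Finset.card_pos.2 ⟨j', hju⟩
          simp only [h, if_pos, h', if_neg, if_false]
          omega
      · have hjl := hmemJL j hj h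
        have hL1 := hcL_le j hjl
        by_cases h' : n + s ≤ j'
        · simp only [h, if_neg, if_false, h', if_pos]
          omega
        · have hju := hmemJU j' hj' h'
          have hU1 := hcU_le j' hju
          have := hJU j' hju
          have h3 : 1 ≤ JU.card := Finset.card_pos.2 ⟨j', hju⟩
          simp only [h, if_neg, if_false, h', if_pos]
          omega
    -- injectivity of gL on DL and gU on DU
    have hgLinj : ∀ j ∈ DL, ∀ j' ∈ DL, gL j = gL j' → j = j' := by
      intro j hj j' hj' heq
      rw [hgL] at heq
      simp only at heq
      by_cases h : j < n <;> by_cases h' : j' < n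
      · simpa [h, h'] using heq
      · rw [if_pos h, if_neg h'] at heq
        omega
      · rw [if_neg h, if_pos h'] at heq
        omega
      · rw [if_neg h, if_neg h'] at heq
        have hjl := hmemJL j hj h
        have hjl' := hmemJL j' hj' h'
        by_contra hne
        rcases lt_or_gt_of_ne hne with hlt | hlt
        · have := hcL_mono j hjl j' hjl' hlt; omega
        · have := hcL_mono j' hjl' j hjl hlt; omega
    have hgUinj : ∀ j ∈ DU, ∀ j' ∈ DU, gU j = gU j' → j = j' := by
      intro j hj j' hj' heq
      rw [hgU] at heq
      simp only at heq
      by_cases h : n + s ≤ j <;> by_cases h' : n + s ≤ j'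
      · simpa [h, h'] using heq
      · rw [if_pos h, if_neg h'] at heq
        have hju' := hmemJU j' hj' h'
        have := hcU_le j' hju'
        have := hJU j' hju'
        omega
      · rw [if_neg h, if_pos h'] at heq
        have hju := hmemJU j hj h
        have := hcU_le j hju
        have := hJU j hju
        omega
      · rw [if_neg h, if_neg h'] at heq
        have hju := hmemJU j hj h
        have hju' := hmemJU j' hj' h'
        have e1 := hcU_le j hju
        have e2 := hcU_le j' hju'
        have e3 := hJU j hju
        have e4 := hJU j' hju'
        have heq2 : cU j = cU j' := by omega
        by_contra hne
        rcases lt_or_gt_of_ne hne with hlt | hlt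
        · have := hcU_mono j hju j' hju' hlt; omega
        · have := hcU_mono j' hju' j hju hlt; omega
    -- invFunOn evaluation
    have hinvL : ∀ j ∈ DL, Function.invFunOn Lg DL (Lg j) = j := by
      intro j hj
      exact hLinj (Function.invFunOn_mem ⟨j, hj, rfl⟩) hj (Function.invFunOn_eq ⟨j, hj, rfl⟩)
    have hinvU : ∀ j ∈ DU, Function.invFunOn Ug DU (Ug j) = j := by
      intro j hj
      exact hUinj (Function.invFunOn_mem ⟨j, hj, rfl⟩) hj (Function.invFunOn_eq ⟨j, hj, rfl⟩)
    have hfL : ∀ j ∈ DL, f (Lg j) = gL j := by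
      intro j hj
      rw [hf]
      simp only
      rw [if_pos (hLval j hj), hinvL j hj]
    have hfU : ∀ j ∈ DU, f (Ug j) = gU j := by
      intro j hj
      rw [hf]
      simp only
      rw [if_neg (by have := hUval j hj; omega), hinvU j hj]
    refine ⟨f, ?_, ?_⟩
    · -- InjOn
      rintro x (⟨j, hj, rfl⟩ | ⟨j, hj, rfl⟩) x' (⟨j', hj', rfl⟩ | ⟨j', hj', rfl⟩) heq
      · rw [hfL j hj, hfL j' hj'] at heq
        rw [hgLinj j hj j' hj' heq]
      · rw [hfL j hj, hfU j' hj'] at heq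
        have := hgLU j hj j' hj'
        omega
      · rw [hfU j hj, hfL j' hj'] at heq
        have := hgLU j' hj' j hj
        omega
      · rw [hfU j hj, hfU j' hj'] at heq
        rw [hgUinj j hj j' hj' heq]
    · -- transversal conditions
      rintro x (⟨j, hj, rfl⟩ | ⟨j, hj, rfl⟩)
      · rw [hfL j hj, ← hLgdef, ← hUgdef]
        have h1 := hgL_le j hj
        have h2 := hDLr j hj
        have hgLn : n ≤ gL j ∨ gL j = j := by
          rw [hgL]
          by_cases h : j < n
          · right; simp [h]
          · left; simp only [h, if_neg, if_false]; omega
        refine ⟨by omega, ?_, ?_⟩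
        · exact hLmono' h1.1 (hDLr j hj)
        · rcases hgLn with h | h
          · have : i < Ug (gL j) := hUi (gL j) h (by omega)
            have : Lg j ≤ i := hLval j hj
            omega
          · rw [h]
            exact hLU j (hDLr j hj)
      · rw [hfU j hj, ← hLgdef, ← hUgdef]
        have h1 := hgU_ge j hj
        have hgUlt : gU j < n + s ∨ gU j = j := by
          rw [hgU]
          by_cases h : n + s ≤ j
          · right; simp [h]
          · left; simp only [h, if_neg, if_false]
            have hju := hmemJU j hj h
            have := hJU j hju
            omega
        refine ⟨h1.2.2.1, ?_, ?_⟩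
        · rcases hgUlt with h | h
          · have : Lg (gU j) ≤ i := hLi (gU j) h
            have : i < Ug j := hUval j hj
            omega
          · rw [h]
            exact hLU j (hDUr j hj)
        · exact hUmono' h1.1 h1.2.2.1

end Aux

namespace Aux

open scoped Classical in
theorem rank_lb (M : Matroid ℕ) (P Q : List Bool) (m r : ℕ)
    (hE : M.E = Set.Icc 1 (m + r))
    (hInd : ∀ X : Set ℕ, M.Indep X ↔ X ⊆ M.E ∧ IsPartialTransversal P Q r X)
    (n s i : ℕ) (hns : n + s ≤ r)
    (Lg Ug : ℕ → ℕ)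
    (hLgdef : ∀ j, Lg j = (northPositions Q).getD j 0)
    (hUgdef : ∀ j, Ug j = (northPositions P).getD j 0)
    (hLmono : ∀ ⦃j j'⦄, j < j' → j' < r → Lg j < Lg j')
    (hUmono : ∀ ⦃j j'⦄, j < j' → j' < r → Ug j < Ug j')
    (hLbnd : ∀ j, j < r → 1 ≤ Lg j ∧ Lg j ≤ m + r)
    (hUbnd : ∀ j, j < r → 1 ≤ Ug j ∧ Ug j ≤ m + r)
    (hLi : ∀ j, j < n + s → Lg j ≤ i)
    (hUi : ∀ j, n ≤ j → j < r → i < Ug j)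
    (hLU : ∀ j, j < r → Lg j ≤ Ug j)
    (B : Set ℕ) (hB : B ⊆ M.E) :
    ((min ((Set.Ico n (n + s) ∩ {j | Lg j ∈ B}).ncard
        + (Set.Ico n (n + s) ∩ {j | Ug j ∈ B}).ncard) s : ℕ) : ℕ∞)
      + (B ∩ ((Lg '' (Set.Iio n)) ∪ (Ug '' (Set.Ico (n + s) r)))).encard ≤ _root_.eRk M B := by
  classical
  have hbrL : (Set.Ico n (n + s) ∩ {j | Lg j ∈ B}).ncard
      = ((Finset.Ico n (n + s)).filter (fun j => Lg j ∈ B)).card := by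
    rw [← Set.ncard_coe_finset]
    congr 1
    ext j
    simp only [Set.mem_inter_iff, Set.mem_setOf_eq, Finset.coe_filter, Set.mem_Ico,
      Finset.mem_Ico]
  have hbrU : (Set.Ico n (n + s) ∩ {j | Ug j ∈ B}).ncard
      = ((Finset.Ico n (n + s)).filter (fun j => Ug j ∈ B)).card := by
    rw [← Set.ncard_coe_finset]
    congr 1
    ext j
    simp only [Set.mem_inter_iff, Set.mem_setOf_eq, Finset.coe_filter, Set.mem_Ico,
      Finset.mem_Ico]
  rw [hbrL, hbrU]
  set C : Set ℕ := (Lg '' (Set.Iio n)) ∪ (Ug '' (Set.Ico (n + s) r)) with hC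
  set jLB : Finset ℕ := (Finset.Ico n (n + s)).filter (fun j => Lg j ∈ B) with hjLB
  set jUB : Finset ℕ := (Finset.Ico n (n + s)).filter (fun j => Ug j ∈ B) with hjUB
  set aB : ℕ := jLB.card + jUB.card with haB
  -- choose subsets of total size min aB s
  obtain ⟨JL', JU', hJL'sub, hJU'sub, hJcard⟩ :
      ∃ JL' JU' : Finset ℕ, JL' ⊆ jLB ∧ JU' ⊆ jUB ∧ JL'.card + JU'.card = min aB s := by
    by_cases h : aB ≤ s
    · exact ⟨jLB, jUB, Finset.Subset.refl _, Finset.Subset.refl _, by omega⟩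
    · by_cases h2 : s ≤ jLB.card
      · obtain ⟨JL', hsub, hcard⟩ := Finset.exists_subset_card_eq h2
        exact ⟨JL', ∅, hsub, Finset.empty_subset _, by simp [hcard]; omega⟩
      · have h3 : s - jLB.card ≤ jUB.card := by omega
        obtain ⟨JU', hsub, hcard⟩ := Finset.exists_subset_card_eq h3
        exact ⟨jLB, JU', Finset.Subset.refl _, hsub, by rw [hcard]; omega⟩
  have hJL'Ico : ∀ j ∈ JL', n ≤ j ∧ j < n + s := by
    intro j hj
    have := hJL'sub hj
    rw [hjLB, Finset.mem_filter, Finset.mem_Ico] at this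
    exact this.1
  have hJU'Ico : ∀ j ∈ JU', n ≤ j ∧ j < n + s := by
    intro j hj
    have := hJU'sub hj
    rw [hjUB, Finset.mem_filter, Finset.mem_Ico] at this
    exact this.1
  obtain ⟨hXindep, hXcard⟩ := indep_core M P Q m r hE hInd n s i hns Lg Ug hLgdef hUgdef
    hLmono hUmono hLbnd hUbnd hLi hUi hLU JL' JU' hJL'Ico hJU'Ico (by omega)
  obtain ⟨hCindep, hCcard⟩ := indep_core M P Q m r hE hInd n s i hns Lg Ug hLgdef hUgdef
    hLmono hUmono hLbnd hUbnd hLi hUi hLU ∅ ∅ (by simp) (by simp) (by simp)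
  set X : Set ℕ := (Lg '' (Set.Iio n ∪ ↑JL')) ∪ (Ug '' (Set.Ico (n + s) r ∪ ↑JU')) with hX
  have hCeq : C = (Lg '' (Set.Iio n ∪ (↑(∅ : Finset ℕ)))) ∪
      (Ug '' (Set.Ico (n + s) r ∪ (↑(∅ : Finset ℕ)))) := by
    simp [hC]
  have hCindep' : M.Indep C := by rw [hCeq]; exact hCindep
  have hCcard' : C.encard = ((r - s : ℕ) : ℕ∞) := by
    rw [hCeq]
    rw [hCcard]
    congr 1
    simp
    omega
  have hCE : C ⊆ M.E := hCindep'.subset_ground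
  have hXsub : X ⊆ B ∪ C := by
    rw [hX, hC]
    rintro x (⟨j, hj, rfl⟩ | ⟨j, hj, rfl⟩)
    · rcases hj with hj | hj
      · exact Or.inr (Or.inl ⟨j, hj, rfl⟩)
      · have := hJL'sub hj
        rw [hjLB, Finset.mem_filter] at this
        exact Or.inl this.2
    · rcases hj with hj | hj
      · exact Or.inr (Or.inr ⟨j, hj, rfl⟩)
      · have := hJU'sub hj
        rw [hjUB, Finset.mem_filter] at this
        exact Or.inl this.2
  have hXcard' : X.encard = ((r - s + min aB s : ℕ) : ℕ∞) := by
    rw [hX, hXcard]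
    congr 1
    omega
  have h1 : ((r - s + min aB s : ℕ) : ℕ∞) ≤ _root_.eRk M (B ∪ C) := by
    rw [← hXcard']
    exact le_eRk hXindep hXsub
  have h2 : _root_.eRk M (B ∩ C) = (B ∩ C).encard :=
    eRk_basis ((hCindep'.subset Set.inter_subset_right).isBasis_self)
  have h3 : _root_.eRk M C = ((r - s : ℕ) : ℕ∞) := by
    rw [eRk_basis hCindep'.isBasis_self, hCcard']
  have hsub := eRk_submod (M := M) hB hCE
  rw [h2, h3] at hsub
  have h4 : ((r - s + min aB s : ℕ) : ℕ∞) + (B ∩ C).encard ≤ _root_.eRk M B + ((r - s : ℕ) : ℕ∞) :=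
    le_trans (add_le_add h1 le_rfl) hsub
  have h5 : ((min aB s : ℕ) : ℕ∞) + (B ∩ C).encard + ((r - s : ℕ) : ℕ∞)
      ≤ _root_.eRk M B + ((r - s : ℕ) : ℕ∞) := by
    calc ((min aB s : ℕ) : ℕ∞) + (B ∩ C).encard + ((r - s : ℕ) : ℕ∞)
        = ((r - s + min aB s : ℕ) : ℕ∞) + (B ∩ C).encard := by push_cast; ring
    _ ≤ _root_.eRk M B + ((r - s : ℕ) : ℕ∞) := h4
  exact (WithTop.add_le_add_iff_right (by exact (ENat.coe_ne_top _))).1 h5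



open scoped Classical in
theorem count_eq (n s r i : ℕ) (hns : n + s ≤ r) (Lg Ug : ℕ → ℕ)
    (hLmono : ∀ ⦃j j'⦄, j < j' → j' < r → Lg j < Lg j')
    (hUmono : ∀ ⦃j j'⦄, j < j' → j' < r → Ug j < Ug j')
    (hLi : ∀ j, j < n + s → Lg j ≤ i)
    (hUi : ∀ j, n ≤ j → j < r → i < Ug j)
    (l : List ℕ) (hl : l.Nodup) :
    l.countP (fun x => @decide (x ∈ (Lg '' (Set.Ico n (n + s)) ∪ Ug '' (Set.Ico n (n + s))))
        (Classical.propDecidable _))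
      = (Set.Ico n (n + s) ∩ {j | Lg j ∈ {x | x ∈ l}}).ncard
        + (Set.Ico n (n + s) ∩ {j | Ug j ∈ {x | x ∈ l}}).ncard := by
  classical
  have hbrL : (Set.Ico n (n + s) ∩ {j | Lg j ∈ {x | x ∈ l}}).ncard
      = ((Finset.Ico n (n + s)).filter (fun j => Lg j ∈ {x | x ∈ l})).card := by
    rw [← Set.ncard_coe_finset]
    congr 1
    ext j
    simp only [Set.mem_inter_iff, Set.mem_setOf_eq, Finset.coe_filter, Set.mem_Ico,
      Finset.mem_Ico]
  have hbrU : (Set.Ico n (n + s) ∩ {j | Ug j ∈ {x | x ∈ l}}).ncard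
      = ((Finset.Ico n (n + s)).filter (fun j => Ug j ∈ {x | x ∈ l})).card := by
    rw [← Set.ncard_coe_finset]
    congr 1
    ext j
    simp only [Set.mem_inter_iff, Set.mem_setOf_eq, Finset.coe_filter, Set.mem_Ico,
      Finset.mem_Ico]
  rw [hbrL, hbrU]
  set S : Set ℕ := Lg '' (Set.Ico n (n + s)) ∪ Ug '' (Set.Ico n (n + s)) with hS
  set p : ℕ → Bool := fun x => @decide (x ∈ S) (Classical.propDecidable _) with hp
  have h1 : l.countP p = (l.filter p).length := List.countP_eq_length_filter
  have h2 : (l.filter p).length = (l.filter p).toFinset.card :=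
    (List.toFinset_card_of_nodup (hl.filter _)).symm
  have h3 : (l.filter p).toFinset = l.toFinset.filter (fun x => p x) := List.toFinset_filter l p
  have h4 : l.toFinset.filter (fun x => p x)
      = ((Finset.Ico n (n + s)).filter (fun j => Lg j ∈ {x | x ∈ l})).image Lg
        ∪ ((Finset.Ico n (n + s)).filter (fun j => Ug j ∈ {x | x ∈ l})).image Ug := by
    ext x
    simp only [Finset.mem_filter, List.mem_toFinset, Finset.mem_union, Finset.mem_image,
      Finset.mem_Ico, hp, decide_eq_true_eq, hS, Set.mem_union, Set.mem_image, Set.mem_Ico,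
      Set.mem_setOf_eq]
    constructor
    · rintro ⟨hxl, ⟨j, hj, rfl⟩ | ⟨j, hj, rfl⟩⟩
      · exact Or.inl ⟨j, ⟨hj, hxl⟩, rfl⟩
      · exact Or.inr ⟨j, ⟨hj, hxl⟩, rfl⟩
    · rintro (⟨j, ⟨hj, hxl⟩, rfl⟩ | ⟨j, ⟨hj, hxl⟩, rfl⟩)
      · exact ⟨hxl, Or.inl ⟨j, hj, rfl⟩⟩
      · exact ⟨hxl, Or.inr ⟨j, hj, rfl⟩⟩
  have hLinj : Set.InjOn Lg ↑((Finset.Ico n (n + s)).filter (fun j => Lg j ∈ {x | x ∈ l})) := by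
    intro a ha b hb heq
    simp only [Finset.coe_filter, Set.mem_setOf_eq, Finset.mem_Ico] at ha hb
    by_contra hne
    rcases lt_or_gt_of_ne hne with h | h
    · exact absurd heq (ne_of_lt (hLmono h (by omega)))
    · exact absurd heq.symm (ne_of_lt (hLmono h (by omega)))
  have hUinj : Set.InjOn Ug ↑((Finset.Ico n (n + s)).filter (fun j => Ug j ∈ {x | x ∈ l})) := by
    intro a ha b hb heq
    simp only [Finset.coe_filter, Set.mem_setOf_eq, Finset.mem_Ico] at ha hb
    by_contra hne
    rcases lt_or_gt_of_ne hne with h | h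
    · exact absurd heq (ne_of_lt (hUmono h (by omega)))
    · exact absurd heq.symm (ne_of_lt (hUmono h (by omega)))
  have hdisj : Disjoint
      (((Finset.Ico n (n + s)).filter (fun j => Lg j ∈ {x | x ∈ l})).image Lg)
      (((Finset.Ico n (n + s)).filter (fun j => Ug j ∈ {x | x ∈ l})).image Ug) := by
    rw [Finset.disjoint_left]
    rintro x hx hx'
    simp only [Finset.mem_image, Finset.mem_filter, Finset.mem_Ico] at hx hx'
    obtain ⟨j, ⟨hj, _⟩, rfl⟩ := hx
    obtain ⟨j', ⟨hj', _⟩, heq⟩ := hx'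
    have := hLi j (by omega)
    have := hUi j' (by omega) (by omega)
    omega
  rw [h1, h2, h3, h4, Finset.card_union_of_disjoint hdisj,
    Finset.card_image_of_injOn hLinj, Finset.card_image_of_injOn hUinj]


theorem ncard_Ico' (a b : ℕ) : (Set.Ico a b).ncard = b - a := by
  rw [← Finset.coe_Ico, Set.ncard_coe_finset, Nat.card_Ico]

theorem ncard_compl (a b : ℕ) (g : ℕ → ℕ) (E A : Set ℕ) (hg : ∀ j, a ≤ j → j < b → g j ∈ E) :
    (Set.Ico a b ∩ {j | g j ∈ E \ A}).ncard + (Set.Ico a b ∩ {j | g j ∈ A}).ncard = b - a := by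
  have h1 : Set.Ico a b ∩ {j | g j ∈ E \ A}
      = Set.Ico a b \ (Set.Ico a b ∩ {j | g j ∈ A}) := by
    ext j
    simp only [Set.mem_inter_iff, Set.mem_setOf_eq, Set.mem_diff, Set.mem_Ico]
    constructor
    · rintro ⟨h2, h3, h4⟩
      exact ⟨h2, fun h5 => h4 h5.2⟩
    · rintro ⟨h2, h3⟩
      exact ⟨h2, hg j h2.1 h2.2, fun h4 => h3 ⟨h2, h4⟩⟩
  rw [h1, Set.ncard_diff_add_ncard_of_subset Set.inter_subset_left (Set.finite_Ico a b),
    ncard_Ico']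

theorem ncard_le' (a b : ℕ) (g : ℕ → ℕ) (B : Set ℕ) :
    (Set.Ico a b ∩ {j | g j ∈ B}).ncard ≤ b - a := by
  calc (Set.Ico a b ∩ {j | g j ∈ B}).ncard ≤ (Set.Ico a b).ncard :=
        Set.ncard_le_ncard Set.inter_subset_left (Set.finite_Ico a b)
  _ = b - a := ncard_Ico' a b

theorem ncard_full (a b : ℕ) (g : ℕ → ℕ) (E : Set ℕ) (hg : ∀ j, a ≤ j → j < b → g j ∈ E) :
    (Set.Ico a b ∩ {j | g j ∈ E}).ncard = b - a := by
  have h1 : Set.Ico a b ∩ {j | g j ∈ E} = Set.Ico a b := by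
    ext j
    simp only [Set.mem_inter_iff, Set.mem_setOf_eq, Set.mem_Ico]
    constructor
    · rintro ⟨h2, _⟩; exact h2
    · intro h2; exact ⟨h2, hg j h2.1 h2.2⟩
  rw [h1, ncard_Ico']


theorem separator' (n s r i : ℕ) (hns : n + s ≤ r) (Lg Ug : ℕ → ℕ)
    (hLmono : ∀ ⦃j j'⦄, j < j' → j' < r → Lg j < Lg j')
    (hUmono : ∀ ⦃j j'⦄, j < j' → j' < r → Ug j < Ug j')
    (hLi : ∀ j, j < n + s → Lg j ≤ i)
    (hUi : ∀ j, n ≤ j → j < r → i < Ug j)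
    (q : ℕ) (hq2 : 2 ≤ q) (t : BTree ℕ) (hnodup : t.leafList.Nodup)
    (hroot : q ≤ (Set.Ico n (n + s) ∩ {j | Lg j ∈ {x | x ∈ t.leafList}}).ncard
        + (Set.Ico n (n + s) ∩ {j | Ug j ∈ {x | x ∈ t.leafList}}).ncard) :
    ∃ t' ∈ t.subtrees,
      q ≤ (Set.Ico n (n + s) ∩ {j | Lg j ∈ {x | x ∈ t'.leafList}}).ncard
          + (Set.Ico n (n + s) ∩ {j | Ug j ∈ {x | x ∈ t'.leafList}}).ncard ∧
      (Set.Ico n (n + s) ∩ {j | Lg j ∈ {x | x ∈ t'.leafList}}).ncard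
          + (Set.Ico n (n + s) ∩ {j | Ug j ∈ {x | x ∈ t'.leafList}}).ncard ≤ 2*q - 2 := by
  have hc := count_eq n s r i hns Lg Ug hLmono hUmono hLi hUi t.leafList hnodup
  obtain ⟨t', ht'mem, h1, h2⟩ := separator
    (fun x => @decide (x ∈ (Lg '' (Set.Ico n (n + s)) ∪ Ug '' (Set.Ico n (n + s))))
      (Classical.propDecidable _)) q hq2 t (by rw [hc]; exact hroot)
  have hnodup' : t'.leafList.Nodup := hnodup.sublist (leafList_sublist t t' ht'mem)
  have hc' := count_eq n s r i hns Lg Ug hLmono hUmono hLi hUi t'.leafList hnodup'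
  rw [hc'] at h1 h2
  exact ⟨t', ht'mem, h1, h2⟩



theorem le_foldr_max {l : List ℕ∞} {a b : ℕ∞} (h : a ∈ l) : a ≤ l.foldr max b := by
  induction l with
  | nil => simp at h
  | cons c t ih =>
    rcases List.mem_cons.1 h with rfl | h
    · exact le_max_left _ _
    · exact le_trans (ih h) (le_max_right _ _)

end Aux

/-- If `M = M[P,Q]` has branch-width at most `k`, then the square-width of the
presentation `[P,Q]` is strictly less than `⌈3k/2⌉`. -/
theorem stmt_10 (P Q : List Bool) (m r k : ℕ) (M : Matroid ℕ)
    (hM : IsLPM M P Q m r) (hbw : branchWidth M ≤ (k : ℕ∞)) :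
    squareWidth P Q < (3 * k + 1) / 2 := by
  obtain ⟨hpair, hE, hInd⟩ := hM
  by_contra hcon
  push_neg at hcon
  -- Step A: get a branch decomposition of width ≤ k
  have hSw : ∃ t : BTree ℕ, IsBranchDecomp M t ∧ decompWidth M t ≤ (k : ℕ∞) := by
    rcases Set.eq_empty_or_nonempty
        {w | ∃ t : BTree ℕ, IsBranchDecomp M t ∧ decompWidth M t = w} with he | hne
    · exfalso
      rw [branchWidth, he, sInf_empty] at hbw
      exact (ENat.coe_ne_top k) (top_le_iff.1 hbw)
    · obtain ⟨w0, hw0, hmin⟩ := (wellFounded_lt (α := ℕ∞)).has_min _ hne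
      obtain ⟨t, ht, hw⟩ := hw0
      refine ⟨t, ht, ?_⟩
      rw [hw]
      have h1 : w0 ≤ branchWidth M := le_sInf (fun b hb => not_lt.1 (hmin b hb))
      exact le_trans h1 hbw
  obtain ⟨t, hdec, hwid⟩ := hSw
  have hlam_le : ∀ t' ∈ t.subtrees, lamVal M {x | x ∈ t'.leafList} ≤ (k : ℕ∞) := by
    intro t' ht'
    refine le_trans (Aux.le_foldr_max ?_) hwid
    exact List.mem_map_of_mem ht'
  -- k ≥ 1
  have hk1 : 1 ≤ k := by
    have h := hlam_le t (Aux.self_mem_subtrees t)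
    have h2 : (1 : ℕ∞) ≤ lamVal M {x | x ∈ t.leafList} := by
      rw [lamVal]
      exact le_add_self
    have h3 : (1 : ℕ∞) ≤ (k : ℕ∞) := le_trans h2 h
    exact_mod_cast h3
  -- the square-width is attained
  have hsq_mem : squareWidth P Q ∈ {k' | ∃ i, HasSquareAt P Q k' i} := by
    rw [squareWidth]
    apply Nat.sSup_mem
    · exact ⟨0, 0, by simp [HasSquareAt]⟩
    · refine ⟨r, ?_⟩
      rintro k' ⟨i, h1, h2⟩
      have h3 : nCount (Q.take i) ≤ nCount Q := Aux.nCount_take_le Q i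
      rw [hpair.northQ] at h3
      omega
  set s := squareWidth P Q with hs
  obtain ⟨i, hsqe, hsqn⟩ := hsq_mem
  set n := nCount (P.take i) with hn
  have hQi : nCount (Q.take i) = n + s := hsqn
  have hns : n + s ≤ r := by
    have := Aux.nCount_take_le Q i
    rw [hpair.northQ] at this
    omega
  -- interval endpoints
  set Lg : ℕ → ℕ := fun j => (northPositions Q).getD j 0 with hLgdef
  set Ug : ℕ → ℕ := fun j => (northPositions P).getD j 0 with hUgdef
  have hLgdef' : ∀ j, Lg j = (northPositions Q).getD j 0 := fun j => rfl
  have hUgdef' : ∀ j, Ug j = (northPositions P).getD j 0 := fun j => rfl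
  have hrQ : nCount Q = r := hpair.northQ
  have hrP : nCount P = r := hpair.northP
  have hLmono : ∀ ⦃j j'⦄, j < j' → j' < r → Lg j < Lg j' := by
    intro j j' h hj'
    exact Aux.np_mono Q j j' h (by rw [hrQ]; exact hj')
  have hUmono : ∀ ⦃j j'⦄, j < j' → j' < r → Ug j < Ug j' := by
    intro j j' h hj'
    exact Aux.np_mono P j j' h (by rw [hrP]; exact hj')
  have hLbnd : ∀ j, j < r → 1 ≤ Lg j ∧ Lg j ≤ m + r := by
    intro j hj
    have h1 := Aux.np_pos Q j (by rw [hrQ]; exact hj)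
    have h2 := Aux.np_le_len Q j (by rw [hrQ]; exact hj)
    rw [hpair.lenQ] at h2
    exact ⟨h1, h2⟩
  have hUbnd : ∀ j, j < r → 1 ≤ Ug j ∧ Ug j ≤ m + r := by
    intro j hj
    have h1 := Aux.np_pos P j (by rw [hrP]; exact hj)
    have h2 := Aux.np_le_len P j (by rw [hrP]; exact hj)
    rw [hpair.lenP] at h2
    exact ⟨h1, h2⟩
  have hLi : ∀ j, j < n + s → Lg j ≤ i := by
    intro j hj
    exact (Aux.np_le_iff Q j (by rw [hrQ]; omega) i).2 (by rw [hQi]; omega)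
  have hUi : ∀ j, n ≤ j → j < r → i < Ug j := by
    intro j h1 h2
    by_contra h
    push_neg at h
    have h3 := (Aux.np_le_iff P j (by rw [hrP]; omega) i).1 h
    rw [← hn] at h3
    omega
  have hLU : ∀ j, j < r → Lg j ≤ Ug j := by
    intro j hj
    have h1 : j < nCount (P.take (Ug j)) :=
      (Aux.np_le_iff P j (by rw [hrP]; omega) (Ug j)).1 le_rfl
    have h2 : nCount (P.take (Ug j)) ≤ nCount (Q.take (Ug j)) := hpair.notAbove _
    exact (Aux.np_le_iff Q j (by rw [hrQ]; omega) (Ug j)).2 (by omega)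
  -- numerics
  set q : ℕ := (2 * s + 2) / 3 with hq
  have hs2 : 2 ≤ s := by omega
  have hq2 : 2 ≤ q := by omega
  have hqs : q ≤ s := by omega
  have hkq : k ≤ q := by omega
  -- membership of interval endpoints in the ground set
  have hLmem : ∀ j, n ≤ j → j < n + s → Lg j ∈ M.E := by
    intro j h1 h2
    rw [hE]
    exact ⟨(hLbnd j (by omega)).1, (hLbnd j (by omega)).2⟩
  have hUmem : ∀ j, n ≤ j → j < n + s → Ug j ∈ M.E := by
    intro j h1 h2
    rw [hE]
    exact ⟨(hUbnd j (by omega)).1, (hUbnd j (by omega)).2⟩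
  have hEleaf : {x | x ∈ t.leafList} = M.E := hdec.2
  -- apply the separator lemma
  have hroot : q ≤ (Set.Ico n (n + s) ∩ {j | Lg j ∈ {x | x ∈ t.leafList}}).ncard
      + (Set.Ico n (n + s) ∩ {j | Ug j ∈ {x | x ∈ t.leafList}}).ncard := by
    rw [hEleaf, Aux.ncard_full n (n + s) Lg M.E hLmem, Aux.ncard_full n (n + s) Ug M.E hUmem]
    omega
  obtain ⟨t', ht'mem, hq_le, h_le⟩ :=
    Aux.separator' n s r i hns Lg Ug hLmono hUmono hLi hUi q hq2 t hdec.1 hroot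
  set A : Set ℕ := {x | x ∈ t'.leafList} with hA
  have hsubl := Aux.leafList_sublist t t' ht'mem
  have hAE : A ⊆ M.E := by
    rw [hA, ← hEleaf]
    intro x hx
    exact hsubl.subset hx
  set aL := (Set.Ico n (n + s) ∩ {j | Lg j ∈ A}).ncard with haL
  set aU := (Set.Ico n (n + s) ∩ {j | Ug j ∈ A}).ncard with haU
  have haLle : aL ≤ s := by
    rw [haL]
    have h := Aux.ncard_le' n (n + s) Lg A
    omega
  have haUle : aU ≤ s := by
    rw [haU]
    have h := Aux.ncard_le' n (n + s) Ug A
    omega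
  -- complement counts
  have hcomplL := Aux.ncard_compl n (n + s) Lg M.E A hLmem
  have hcomplU := Aux.ncard_compl n (n + s) Ug M.E A hUmem
  rw [← haL] at hcomplL
  rw [← haU] at hcomplU
  have heqL : (Set.Ico n (n + s) ∩ {j | Lg j ∈ M.E \ A}).ncard = s - aL := by omega
  have heqU : (Set.Ico n (n + s) ∩ {j | Ug j ∈ M.E \ A}).ncard = s - aU := by omega
  -- rank lower bounds
  set C : Set ℕ := Lg '' (Set.Iio n) ∪ Ug '' (Set.Ico (n + s) r) with hC
  have hrkA := Aux.rank_lb M P Q m r hE hInd n s i hns Lg Ug hLgdef' hUgdef'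
    hLmono hUmono hLbnd hUbnd hLi hUi hLU A hAE
  have hrkA' := Aux.rank_lb M P Q m r hE hInd n s i hns Lg Ug hLgdef' hUgdef'
    hLmono hUmono hLbnd hUbnd hLi hUi hLU (M.E \ A) Set.diff_subset
  rw [← hC, ← haL, ← haU] at hrkA
  rw [← hC, heqL, heqU] at hrkA'
  -- facts about C
  obtain ⟨hCindep, hCcard⟩ := Aux.indep_core M P Q m r hE hInd n s i hns Lg Ug hLgdef' hUgdef'
    hLmono hUmono hLbnd hUbnd hLi hUi hLU ∅ ∅ (by simp) (by simp) (by simp)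
  have hCeq : C = (Lg '' (Set.Iio n ∪ (↑(∅ : Finset ℕ)))) ∪
      (Ug '' (Set.Ico (n + s) r ∪ (↑(∅ : Finset ℕ)))) := by
    simp [hC]
  have hCindep' : M.Indep C := by rw [hCeq]; exact hCindep
  have hCcard' : C.encard = ((r - s : ℕ) : ℕ∞) := by
    rw [hCeq, hCcard]
    congr 1
    simp
    omega
  have hCE : C ⊆ M.E := hCindep'.subset_ground
  have hCsum : (A ∩ C).encard + ((M.E \ A) ∩ C).encard = ((r - s : ℕ) : ℕ∞) := by
    have h1 : (M.E \ A) ∩ C = C \ A := by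
      ext x
      constructor
      · rintro ⟨⟨_, h⟩, hc⟩
        exact ⟨hc, h⟩
      · rintro ⟨hc, h⟩
        exact ⟨⟨hCE hc, h⟩, hc⟩
    have h2 : A ∩ C = C ∩ A := Set.inter_comm _ _
    rw [h1, h2, add_comm, Set.encard_diff_add_encard_inter, hCcard']
  -- min sum bound
  have hminsum : q + s ≤ min (aL + aU) s + min ((s - aL) + (s - aU)) s := by omega
  -- rank of the ground set
  have hrkE : _root_.eRk M M.E ≤ (r : ℕ∞) := by
    apply Aux.eRk_le
    intro I hI hIE
    obtain ⟨f, hfinj, hfcond⟩ := ((hInd I).1 hI).2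
    calc I.encard = (f '' I).encard := (hfinj.encard_image).symm
    _ ≤ (Set.Iio r : Set ℕ).encard := by
        apply Set.encard_mono
        rintro y ⟨x, hx, rfl⟩
        exact (hfcond x hx).1
    _ = (r : ℕ∞) := by
        rw [← Finset.coe_range, Set.encard_coe_eq_coe_finsetCard, Finset.card_range]
  -- assemble
  have hsum : ((q + r : ℕ) : ℕ∞) ≤ _root_.eRk M A + _root_.eRk M (M.E \ A) := by
    have he1 : (q + r : ℕ) = (q + s) + (r - s) := by omega
    calc ((q + r : ℕ) : ℕ∞) = ((q + s : ℕ) : ℕ∞) + ((r - s : ℕ) : ℕ∞) := by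
          rw [he1]; push_cast; ring
    _ ≤ ((min (aL + aU) s + min ((s - aL) + (s - aU)) s : ℕ) : ℕ∞)
          + ((A ∩ C).encard + ((M.E \ A) ∩ C).encard) := by
          rw [hCsum]
          apply add_le_add _ le_rfl
          exact_mod_cast hminsum
    _ = (((min (aL + aU) s : ℕ) : ℕ∞) + (A ∩ C).encard)
          + (((min ((s - aL) + (s - aU)) s : ℕ) : ℕ∞) + ((M.E \ A) ∩ C).encard) := by
          push_cast
          ring
    _ ≤ _root_.eRk M A + _root_.eRk M (M.E \ A) := add_le_add hrkA hrkA'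
  have hlam : ((q : ℕ∞)) + 1 ≤ lamVal M A := by
    rw [lamVal]
    have hle : _root_.eRk M M.E + (q : ℕ∞) ≤ _root_.eRk M A + _root_.eRk M (M.E \ A) := by
      calc _root_.eRk M M.E + (q : ℕ∞) ≤ (r : ℕ∞) + (q : ℕ∞) := add_le_add hrkE le_rfl
      _ = ((q + r : ℕ) : ℕ∞) := by push_cast; ring
      _ ≤ _ := hsum
    have hne : _root_.eRk M M.E ≠ ⊤ := (hrkE.trans_lt (ENat.coe_lt_top r)).ne
    have h2 := ENat.le_sub_of_add_le_left hne hle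
    exact add_le_add h2 le_rfl
  have hfin : ((q : ℕ∞)) + 1 ≤ (k : ℕ∞) := le_trans hlam (hlam_le t' ht'mem)
  have hfin' : q + 1 ≤ k := by exact_mod_cast hfin
  omega
end

section
/- The branch-width of the uniform matroid U_{j,2j} equals ⌈2j/3⌉ + 1 for j ≥ 1. -/
open Matroid

section Stmt11Aux

variable {α : Type*}

private lemma le_foldr_max' {l : List ℕ∞} {a : ℕ∞} (h : a ∈ l) : a ≤ l.foldr max 0 := by
  induction l with
  | nil => simp at h
  | cons b l ih =>
    rcases List.mem_cons.mp h with rfl | h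
    · exact le_max_left _ _
    · exact (ih h).trans (le_max_right _ _)

private lemma foldr_max_le' {l : List ℕ∞} {b : ℕ∞} (h : ∀ a ∈ l, a ≤ b) :
    l.foldr max 0 ≤ b := by
  induction l with
  | nil => simp
  | cons a l ih =>
    simp only [List.foldr_cons, max_le_iff]
    exact ⟨h a (by simp), ih fun x hx => h x (by simp [hx])⟩

private lemma subtree_sublist : ∀ {t s : BTree α}, s ∈ t.subtrees →
    s.leafList.Sublist t.leafList := by
  intro t
  induction t with
  | leaf a =>
    intro s hs
    simp only [BTree.subtrees, List.mem_singleton] at hs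
    subst hs; exact List.Sublist.refl _
  | node l r ihl ihr =>
    intro s hs
    simp only [BTree.subtrees, List.mem_cons, List.mem_append] at hs
    rcases hs with rfl | hs | hs
    · exact List.Sublist.refl _
    · exact (ihl hs).trans (List.sublist_append_left _ _)
    · exact (ihr hs).trans (List.sublist_append_right _ _)

private lemma self_mem_subtrees (t : BTree α) : t ∈ t.subtrees := by
  cases t <;> simp [BTree.subtrees]

private lemma encard_setOf_mem {l : List α} (h : l.Nodup) :
    {x | x ∈ l}.encard = l.length := by
  classical
  have h1 : {x | x ∈ l} = (l.toFinset : Set α) := by ext x; simp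
  rw [h1, Set.encard_coe_eq_coe_finsetCard, List.toFinset_card_of_nodup h]

private lemma eRk_uniform {M : Matroid α} {j n : ℕ} (hM : IsUniform M j n) {A : Set α}
    (hA : A ⊆ M.E) {a : ℕ} (ha : A.encard = a) : _root_.eRk M A = ((min a j : ℕ) : ℕ∞) := by
  obtain ⟨hE, hInd⟩ := hM
  apply le_antisymm
  · apply iSup_le
    rintro ⟨I, hI, hIA⟩
    have h1 : I.encard ≤ (j : ℕ∞) := (hInd I hI.subset_ground).mp hI
    have h2 : I.encard ≤ (a : ℕ∞) := ha ▸ Set.encard_mono hIA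
    change I.encard ≤ _
    rcases le_total a j with h3 | h3
    · rw [min_eq_left h3]; exact h2
    · rw [min_eq_right h3]; exact h1
  · have hle : ((min a j : ℕ) : ℕ∞) ≤ A.encard := by
      rw [ha]; exact_mod_cast min_le_left a j
    obtain ⟨I, hIA, hIcard⟩ := Set.exists_subset_encard_eq hle
    have hIind : M.Indep I := (hInd I (hIA.trans hA)).mpr
      (by rw [hIcard]; exact_mod_cast min_le_right a j)
    exact le_trans hIcard.ge
      (le_iSup (fun I : {I : Set α // M.Indep I ∧ I ⊆ A} => (I : Set α).encard) ⟨I, hIind, hIA⟩)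

private lemma lamVal_uniform {M : Matroid α} {j : ℕ} (hM : IsUniform M j (2 * j)) {A : Set α}
    (hA : A ⊆ M.E) {a : ℕ} (ha : A.encard = a) :
    lamVal M A = ((min a (2 * j - a) : ℕ) : ℕ∞) + 1 := by
  have haj : a ≤ 2 * j := by
    have h := Set.encard_mono hA
    rw [ha, hM.1] at h
    exact_mod_cast h
  have hdiff : (M.E \ A).encard = ((2 * j - a : ℕ) : ℕ∞) := by
    have h1 := Set.encard_diff_add_encard_of_subset hA
    rw [ha, hM.1] at h1
    have h2 : ((2 * j - a : ℕ) : ℕ∞) + (a : ℕ∞) = ((2 * j : ℕ) : ℕ∞) := by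
      rw [← Nat.cast_add]; congr 1; omega
    exact WithTop.add_right_cancel (ENat.coe_ne_top a) (h1.trans h2.symm)
  rw [lamVal, eRk_uniform hM hA ha, eRk_uniform hM Set.Subset.rfl hM.1,
      eRk_uniform hM Set.diff_subset hdiff, ← Nat.cast_add, ← ENat.coe_sub]
  congr 2
  omega

private lemma lam_subtree {M : Matroid α} {j : ℕ} (hM : IsUniform M j (2 * j)) {t s : BTree α}
    (ht : IsBranchDecomp M t) (hs : s ∈ t.subtrees) :
    lamVal M {x | x ∈ s.leafList} =
      ((min s.leafList.length (2 * j - s.leafList.length) : ℕ) : ℕ∞) + 1 := by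
  have hsub := subtree_sublist hs
  have hnd : s.leafList.Nodup := hsub.nodup ht.1
  have hset : {x | x ∈ s.leafList} ⊆ M.E := by
    rw [← ht.2]; intro x hx; exact hsub.subset hx
  exact lamVal_uniform hM hset (encard_setOf_mem hnd)

private lemma exists_middle_subtree (c : ℕ) :
    ∀ t : BTree α, c ≤ t.leafList.length →
      ∃ s ∈ t.subtrees, c ≤ s.leafList.length ∧
        (s.leafList.length ≤ 2 * c - 2 ∨ s.leafList.length = 1) := by
  intro t
  induction t with
  | leaf a =>
    intro h
    exact ⟨.leaf a, by simp [BTree.subtrees], h, Or.inr rfl⟩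
  | node l r ihl ihr =>
    intro h
    by_cases h1 : c ≤ l.leafList.length
    · obtain ⟨s, hs, h2⟩ := ihl h1
      exact ⟨s, by simp only [BTree.subtrees, List.mem_cons, List.mem_append]; tauto, h2⟩
    · by_cases h2 : c ≤ r.leafList.length
      · obtain ⟨s, hs, h3⟩ := ihr h2
        exact ⟨s, by simp only [BTree.subtrees, List.mem_cons, List.mem_append]; tauto, h3⟩
      · refine ⟨.node l r, self_mem_subtrees _, ?_, Or.inl ?_⟩
        · simpa [BTree.leafList] using h
        · simp only [BTree.leafList, List.length_append]
          omega

private def comb (d : α) : List α → BTree α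
  | [] => .leaf d
  | [a] => .leaf a
  | a :: b :: rest => .node (.leaf a) (comb d (b :: rest))

private lemma comb_leafList (d : α) : ∀ l : List α, l ≠ [] → (comb d l).leafList = l
  | [a], _ => rfl
  | a :: b :: rest, _ => by
    have h := comb_leafList d (b :: rest) (by simp)
    simp [comb, BTree.leafList, h]

end Stmt11Aux

/-- The branch-width of the uniform matroid `U_{j,2j}` equals `⌈2j/3⌉ + 1` for `j ≥ 1`. -/
theorem stmt_11 {α : Type*} (M : Matroid α) (j : ℕ) (hj : 1 ≤ j)
    (hM : IsUniform M j (2 * j)) :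
    branchWidth M = ((2 * j + 2) / 3 + 1 : ℕ) := by
  classical
  set n := 2 * j with hn
  set c := (2 * j + 2) / 3 with hc
  have hc1 : 1 ≤ c := by omega
  have hcn : 3 * c ≤ n + 2 ∧ n + 2 < 3 * c + 3 := by constructor <;> omega
  have hE := hM.1
  have hrhs : ((2 * j + 2) / 3 + 1 : ℕ) = ((c : ℕ∞) + 1 : ℕ∞) := by
    push_cast; rfl
  rw [hrhs]
  apply le_antisymm
  · -- upper bound: construct a decomposition
    have hEfin : M.E.Finite := Set.finite_of_encard_eq_coe hE
    set l : List α := hEfin.toFinset.toList with hl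
    have hlnd : l.Nodup := Finset.nodup_toList _
    have hlset : {x | x ∈ l} = M.E := by
      ext x; simp [hl, Set.Finite.mem_toFinset]
    have hllen : l.length = n := by
      have h1 := encard_setOf_mem hlnd
      rw [hlset, hE] at h1
      exact_mod_cast h1.symm
    have hlne : l ≠ [] := by
      intro h; rw [h] at hllen; simp at hllen; omega
    set d : α := l.head hlne with hd
    -- build the tree
    obtain ⟨T, hTleaf, hTbound⟩ :
        ∃ T : BTree α, T.leafList = l ∧
          ∀ s ∈ T.subtrees, min s.leafList.length (n - s.leafList.length) ≤ c := by
      by_cases hsplit : n ≤ 2 * c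
      · -- two parts of size j
        refine ⟨.node (comb d (l.take j)) (comb d (l.drop j)), ?_, ?_⟩
        · have ht1 : (l.take j) ≠ [] := by
            intro h
            have := congrArg List.length h
            simp [hllen] at this; omega
          have ht2 : (l.drop j) ≠ [] := by
            intro h
            have := congrArg List.length h
            simp [hllen] at this; omega
          simp [BTree.leafList, comb_leafList d _ ht1, comb_leafList d _ ht2]
        · intro s hs
          have hlen1 : (comb d (l.take j)).leafList.length ≤ j := by
            rw [comb_leafList d _ (by
              intro h; have := congrArg List.length h; simp [hllen] at this; omega)]
            simp [hllen]
          have hlen2 : (comb d (l.drop j)).leafList.length ≤ j := by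
            rw [comb_leafList d _ (by
              intro h; have := congrArg List.length h; simp [hllen] at this; omega)]
            simp [hllen]; omega
          simp only [BTree.subtrees, List.mem_cons, List.mem_append] at hs
          rcases hs with rfl | hs | hs
          · simp only [BTree.leafList, List.length_append]
            omega
          · have := (subtree_sublist hs).length_le
            omega
          · have := (subtree_sublist hs).length_le
            omega
      · -- three parts: c, c, n - 2c
        push_neg at hsplit
        set l1 := l.take c with hl1
        set l2 := (l.drop c).take c with hl2
        set l3 := (l.drop c).drop c with hl3
        have hlen1 : l1.length = c := by simp [hl1, hllen]; omega
        have hlen2 : l2.length = c := by simp [hl2, hllen]; omega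
        have hlen3 : l3.length = n - 2 * c := by simp [hl3, hllen]; omega
        have hne1 : l1 ≠ [] := by
          intro h; rw [h] at hlen1; simp at hlen1; omega
        have hne2 : l2 ≠ [] := by
          intro h; rw [h] at hlen2; simp at hlen2; omega
        have hne3 : l3 ≠ [] := by
          intro h; rw [h] at hlen3; simp at hlen3; omega
        refine ⟨.node (comb d l1) (.node (comb d l2) (comb d l3)), ?_, ?_⟩
        · simp only [BTree.leafList, comb_leafList d _ hne1, comb_leafList d _ hne2,
            comb_leafList d _ hne3]
          rw [hl1, hl2, hl3, List.take_append_drop, List.take_append_drop]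
        · intro s hs
          have hc1' : (comb d l1).leafList.length = c := by
            rw [comb_leafList d _ hne1, hlen1]
          have hc2' : (comb d l2).leafList.length = c := by
            rw [comb_leafList d _ hne2, hlen2]
          have hc3' : (comb d l3).leafList.length = n - 2 * c := by
            rw [comb_leafList d _ hne3, hlen3]
          simp only [BTree.subtrees, List.mem_cons, List.mem_append] at hs
          rcases hs with rfl | hs | rfl | hs | hs
          · simp only [BTree.leafList, List.length_append]
            omega
          · have := (subtree_sublist hs).length_le
            omega
          · simp only [BTree.leafList, List.length_append]
            omega
          · have := (subtree_sublist hs).length_le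
            omega
          · have := (subtree_sublist hs).length_le
            omega
    have hT : IsBranchDecomp M T := by
      constructor
      · rw [hTleaf]; exact hlnd
      · rw [hTleaf]; exact hlset
    have hW : decompWidth M T ≤ (c : ℕ∞) + 1 := by
      apply foldr_max_le'
      intro a ha
      simp only [List.mem_map] at ha
      obtain ⟨s, hs, rfl⟩ := ha
      rw [lam_subtree hM hT hs]
      have hb := hTbound s hs
      gcongr
    exact le_trans (sInf_le ⟨T, hT, rfl⟩) hW
  · -- lower bound
    apply le_sInf
    rintro w ⟨t, ht, rfl⟩
    have hlen : t.leafList.length = n := by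
      have h1 := encard_setOf_mem ht.1
      rw [ht.2, hE] at h1
      exact_mod_cast h1.symm
    obtain ⟨s, hs, h1, h2⟩ := exists_middle_subtree c t (by omega)
    have hmin : c ≤ min s.leafList.length (n - s.leafList.length) := by
      have hle : s.leafList.length ≤ n := hlen ▸ (subtree_sublist hs).length_le
      omega
    have hmem : lamVal M {x | x ∈ s.leafList} ∈
        t.subtrees.map (fun s => lamVal M {x | x ∈ s.leafList}) :=
      List.mem_map_of_mem hs
    refine le_trans ?_ (le_foldr_max' hmem)
    rw [lam_subtree hM ht hs]
    gcongr
end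

section
/- Let [P,Q] be a path presentation with a proper k×k square at position i, and let B_i(P) = P_i + k North steps, B_i(Q) = Q_i + k East steps. Then M[B_i(P), B_i(Q)] is a minor of M[P,Q]. -/
open Matroid

namespace LPMaux

def nu (w : List Bool) (j : ℕ) : ℕ := (northPositions w).getD j 0

lemma nu_eq (w : List Bool) (j : ℕ) : (northPositions w).getD j 0 = nu w j := rfl

lemma count_len (w : List Bool) : eCount w + nCount w = w.length := by
  unfold eCount nCount
  induction w with
  | nil => simp
  | cons x w ih => cases x <;> simp [List.count_cons] <;> omega

lemma nCount_take_mono (w : List Bool) {s t : ℕ} (h : s ≤ t) :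
    nCount (w.take s) ≤ nCount (w.take t) := by
  unfold nCount
  have : w.take s = (w.take t).take s := by rw [List.take_take, min_eq_left h]
  rw [this]
  exact ((w.take t).take_sublist s).count_le true

lemma nCount_le (w : List Bool) (t : ℕ) : nCount (w.take t) ≤ nCount w := by
  unfold nCount
  exact (w.take_sublist t).count_le true

lemma nCount_take_add (w : List Bool) (a b : ℕ) :
    nCount (w.take (a + b)) ≤ nCount (w.take a) + b := by
  unfold nCount
  rw [List.take_add, List.count_append]
  have h1 := List.length_take_le b (w.drop a)
  have h2 := List.count_le_length (a := true) (l := (w.drop a).take b)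
  omega

lemma np_cons (x : Bool) (w : List Bool) :
    northPositions (x :: w) = (if x then [1] else []) ++ (northPositions w).map (· + 1) := by
  unfold northPositions
  rw [List.length_cons, List.range_succ_eq_map, List.filter_cons]
  simp only [List.getD_cons_zero]
  rw [List.filter_map]
  have hcomp : ((fun j => (x :: w).getD j false) ∘ Nat.succ) = fun j => w.getD j false := by
    funext j; simp [List.getD_cons_succ]
  rw [hcomp]
  cases x <;> simp [List.map_map]

lemma np_append (a b : List Bool) :
    northPositions (a ++ b) = northPositions a ++ (northPositions b).map (· + a.length) := by
  induction a with
  | nil => simp [northPositions]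
  | cons x a ih =>
    rw [List.cons_append, np_cons, ih, np_cons, List.map_append, List.map_map,
      List.append_assoc, List.length_cons]
    have : ((fun x => x + 1) ∘ fun x => x + a.length) = fun y => y + (a.length + 1) := by
      funext j; simp; omega
    rw [this]

lemma np_rep_true (k : ℕ) : northPositions (List.replicate k true) = (List.range k).map (· + 1) := by
  induction k with
  | zero => simp [northPositions]
  | succ k ih =>
    rw [List.replicate_succ, np_cons, ih, List.range_succ_eq_map, if_pos rfl]
    simp [List.map_map]

lemma np_rep_false (k : ℕ) : northPositions (List.replicate k false) = [] := by
  induction k with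
  | zero => simp [northPositions]
  | succ k ih => rw [List.replicate_succ, np_cons, ih, if_neg (by simp)]; simp

lemma np_length (w : List Bool) : (northPositions w).length = nCount w := by
  induction w with
  | nil => simp [northPositions, nCount]
  | cons x w ih =>
    rw [np_cons]
    cases x <;> simp [nCount, List.count_cons] at * <;> omega

lemma getD_map_add (l : List ℕ) (j c : ℕ) (h : j < l.length) :
    (l.map (· + c)).getD j 0 = l.getD j 0 + c := by
  rw [List.getD_eq_getElem _ _ (by simpa using h), List.getD_eq_getElem _ _ h]
  simp

lemma nu_cons_true (w : List Bool) (j : ℕ) (h : j < nCount w) :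
    nu (true :: w) (j + 1) = nu w j + 1 := by
  unfold nu
  rw [np_cons, if_pos rfl, List.cons_append, List.nil_append, List.getD_cons_succ]
  exact getD_map_add _ _ _ (by rw [np_length]; exact h)

lemma nu_cons_false (w : List Bool) (j : ℕ) (h : j < nCount w) :
    nu (false :: w) j = nu w j + 1 := by
  unfold nu
  rw [np_cons, if_neg (by simp), List.nil_append]
  exact getD_map_add _ _ _ (by rw [np_length]; exact h)

lemma nCount_cons_true (w : List Bool) : nCount (true :: w) = nCount w + 1 := by
  simp [nCount]

lemma nCount_cons_false (w : List Bool) : nCount (false :: w) = nCount w := by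
  simp [nCount]

lemma np_count : ∀ (w : List Bool) (j : ℕ), j < nCount w →
    nCount (w.take (nu w j - 1)) = j ∧ nCount (w.take (nu w j)) = j + 1 := by
  intro w
  induction w with
  | nil => intro j h; simp [nCount] at h
  | cons x w ih =>
    intro j hj
    cases x with
    | true =>
      rw [nCount_cons_true] at hj
      cases j with
      | zero =>
        constructor
        · simp [nu, np_cons, nCount]
        · simp [nu, np_cons, nCount, List.count_cons]
      | succ j =>
        have hj' : j < nCount w := by omega
        obtain ⟨ih1, ih2⟩ := ih j hj'
        have hpos : 1 ≤ nu w j := by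
          by_contra h
          have : nu w j = 0 := by omega
          rw [this] at ih2; simp [nCount] at ih2
        rw [nu_cons_true w j hj']
        constructor
        · have : nu w j + 1 - 1 = (nu w j - 1) + 1 := by omega
          rw [this, List.take_succ_cons, nCount_cons_true, ih1]
        · rw [List.take_succ_cons, nCount_cons_true, ih2]
    | false =>
      rw [nCount_cons_false] at hj
      obtain ⟨ih1, ih2⟩ := ih j hj
      have hpos : 1 ≤ nu w j := by
        by_contra h
        have : nu w j = 0 := by omega
        rw [this] at ih2; simp [nCount] at ih2
      rw [nu_cons_false w j hj]
      constructor
      · have : nu w j + 1 - 1 = (nu w j - 1) + 1 := by omega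
        rw [this, List.take_succ_cons, nCount_cons_false, ih1]
      · rw [List.take_succ_cons, nCount_cons_false, ih2]

lemma np_pos (w : List Bool) (j : ℕ) (h : j < nCount w) :
    1 ≤ nu w j ∧ nu w j ≤ w.length := by
  obtain ⟨h1, h2⟩ := np_count w j h
  constructor
  · by_contra hc
    have : nu w j = 0 := by omega
    rw [this] at h2; simp [nCount] at h2
  · by_contra hc
    have : w.take (nu w j - 1) = w := List.take_of_length_le (by omega)
    rw [this] at h1; omega

lemma nu_le_of_count (w : List Bool) {j t : ℕ} (h : j + 1 ≤ nCount (w.take t)) :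
    nu w j ≤ t := by
  have hj : j < nCount w := lt_of_lt_of_le h (nCount_le w t)
  by_contra hc
  have h2 : t ≤ nu w j - 1 := by omega
  have := nCount_take_mono w h2
  have := (np_count w j hj).1
  omega

lemma lt_nu_of_count (w : List Bool) {j t : ℕ} (hj : j < nCount w)
    (h : nCount (w.take t) ≤ j) : t < nu w j := by
  by_contra hc
  have := nCount_take_mono w (show nu w j ≤ t by omega)
  have := (np_count w j hj).2
  omega

lemma nu_lt_nu (w : List Bool) {a b : ℕ} (hab : a < b) (hb : b < nCount w) :
    nu w a < nu w b := by
  apply lt_nu_of_count w hb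
  have := (np_count w a (lt_trans hab hb)).2
  omega

lemma nu_mono (w : List Bool) {a b : ℕ} (hab : a ≤ b) (hb : b < nCount w) :
    nu w a ≤ nu w b := by
  rcases eq_or_lt_of_le hab with rfl | h
  · exact le_refl _
  · exact le_of_lt (nu_lt_nu w h hb)

lemma nu_add_le (w : List Bool) : ∀ (b a : ℕ), a ≤ b → b < nCount w →
    nu w a + (b - a) ≤ nu w b := by
  intro b
  induction b with
  | zero => intro a h _; interval_cases a; simp
  | succ b ihb =>
    intro a ha hb
    rcases eq_or_lt_of_le ha with rfl | h
    · simp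
    · have h1 := ihb a (by omega) (by omega)
      have h2 := nu_lt_nu w (show b < b + 1 by omega) hb
      omega

lemma nu_prefix (w : List Bool) (t j : ℕ) (h : j < nCount (w.take t)) :
    nu w j = nu (w.take t) j := by
  unfold nu
  conv_lhs => rw [← List.take_append_drop t w]
  rw [np_append, List.getD_append _ _ _ _ (by rw [np_length]; exact h)]

lemma nu_QB (Q : List Bool) (i k j : ℕ) :
    nu (Q.take i ++ List.replicate k false) j = nu (Q.take i) j := by
  unfold nu
  rw [np_append, np_rep_false]
  simp

lemma nu_PB_low (P : List Bool) (i k j : ℕ) (h : j < nCount (P.take i)) :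
    nu (P.take i ++ List.replicate k true) j = nu (P.take i) j := by
  unfold nu
  rw [np_append, List.getD_append _ _ _ _ (by rw [np_length]; exact h)]

lemma nu_PB_high (P : List Bool) (i k j : ℕ) (hi : i ≤ P.length)
    (h1 : nCount (P.take i) ≤ j) (h2 : j < nCount (P.take i) + k) :
    nu (P.take i ++ List.replicate k true) j = (j - nCount (P.take i)) + 1 + i := by
  unfold nu
  rw [np_append, List.getD_append_right _ _ _ _ (by rw [np_length]; exact h1),
    np_length, np_rep_true, List.length_take, min_eq_left hi, List.map_map]
  have hlt : j - nCount (P.take i) < k := by omega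
  rw [List.getD_eq_getElem _ _ (by simpa using hlt)]
  simp
  omega

lemma contract_indep_iff' {α : Type*} {M : Matroid α} {C : Set α} (hC : M.Indep C) (X : Set α) :
    ((M✶ ↾ (M.E \ C))✶).Indep X ↔ X ⊆ M.E \ C ∧ M.Indep (X ∪ C) := by
  have hCE : C ⊆ M.E := hC.subset_ground
  have hbase : ∀ B : Set α, ((M✶ ↾ (M.E \ C))✶).IsBase B ↔
      (M✶.IsBasis ((M.E \ C) \ B) (M.E \ C) ∧ B ⊆ M.E \ C) := by
    intro B
    rw [dual_isBase_iff', restrict_ground_eq,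
      isBase_restrict_iff (X := M.E \ C) (show M.E \ C ⊆ M✶.E by rw [dual_ground]; exact Set.diff_subset)]
  constructor
  · intro hXI
    have hXE : X ⊆ M.E \ C := by
      have := hXI.subset_ground
      simpa using this
    obtain ⟨BD, hBD, hXBD⟩ := hXI.exists_isBase_superset
    rw [hbase] at hBD
    obtain ⟨hbasisJ, hBDsub⟩ := hBD
    obtain ⟨Bs, hBs, hJeq⟩ := hbasisJ.exists_isBase
    have hsubdual : M.E \ C ⊆ M✶.E := by rw [dual_ground]; exact Set.diff_subset
    have h2 := (hBs.inter_isBasis_iff_compl_inter_isBasis_dual hsubdual).mp (by rw [← hJeq]; exact hbasisJ)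
    rw [dual_dual, dual_ground, Set.diff_diff_cancel_left hCE] at h2
    have hCBs : (M.E \ Bs) ∩ C = C := hC.eq_of_isBasis h2
    have hBm : M.IsBase (M.E \ Bs) := hBs.compl_isBase_of_dual
    refine ⟨hXE, hBm.indep.subset ?_⟩
    rintro x (hx | hx)
    · have hxBD : x ∈ BD := hXBD hx
      have hxEC : x ∈ M.E \ C := hBDsub hxBD
      refine ⟨hxEC.1, fun hxBs => ?_⟩
      have : x ∈ Bs ∩ (M.E \ C) := ⟨hxBs, hxEC⟩
      rw [← hJeq] at this
      exact this.2 hxBD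
    · rw [← hCBs] at hx; exact ⟨hx.1.1, hx.1.2⟩
  · rintro ⟨hXE, hXC⟩
    obtain ⟨B0, hB0, hsub⟩ := hXC.exists_isBase_superset
    have hCB0 : C ⊆ B0 := (Set.subset_union_right).trans hsub
    have hbasisC : M.IsBasis (B0 ∩ C) C := by
      rw [Set.inter_eq_right.mpr hCB0]; exact hC.isBasis_self
    have h2 := (hB0.inter_isBasis_iff_compl_inter_isBasis_dual hCE).mp hbasisC
    have hBDbase : ((M✶ ↾ (M.E \ C))✶).IsBase ((M.E \ C) ∩ B0) := by
      rw [hbase]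
      refine ⟨?_, Set.inter_subset_left⟩
      have heq : (M.E \ C) \ ((M.E \ C) ∩ B0) = (M.E \ B0) ∩ (M.E \ C) := by
        ext x; simp only [Set.mem_diff, Set.mem_inter_iff]; tauto
      rw [heq]; exact h2
    exact hBDbase.indep.subset (fun x hx => ⟨hXE hx, (hsub (Set.mem_union_left _ hx))⟩)

lemma rematch (L U : ℕ → ℕ) (n : ℕ)
    (hL : ∀ a b, a ≤ b → b < n → L a ≤ L b)
    (hU : ∀ a b, a ≤ b → b < n → U a ≤ U b) :
    ∀ (c : ℕ) (X : Finset ℕ) (f : ℕ → ℕ), X.card = c → Set.InjOn f ↑X →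
      (∀ x ∈ X, f x < n ∧ L (f x) ≤ x ∧ x ≤ U (f x)) →
      ∃ g : ℕ → ℕ, (∀ x ∈ X, (∃ x0 ∈ X, f x0 = g x) ∧ L (g x) ≤ x ∧ x ≤ U (g x)) ∧
        ∀ x ∈ X, ∀ y ∈ X, x < y → g x < g y := by
  intro c
  induction c using Nat.strong_induction_on with
  | _ c ih =>
  intro X f hcard hinj hval
  rcases Finset.eq_empty_or_nonempty X with rfl | hX
  · exact ⟨f, by simp, by simp⟩
  obtain ⟨xs, hxsX, hxsmax⟩ : ∃ xs, xs ∈ X ∧ ∀ a ∈ X, a ≤ xs :=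
    ⟨X.max' hX, X.max'_mem hX, fun a ha => X.le_max' a ha⟩
  have hYne : (X.image f).Nonempty := hX.image f
  obtain ⟨x', hx'X, hx'f⟩ := Finset.mem_image.mp ((X.image f).max'_mem hYne)
  have hley : ∀ a ∈ X, f a ≤ f x' := by
    intro a ha
    rw [hx'f]; exact Finset.le_max' _ _ (Finset.mem_image_of_mem f ha)
  clear hx'f
  have hswapX : ∀ a ∈ X, Equiv.swap xs x' a ∈ X := by
    intro a ha
    rcases eq_or_ne a xs with rfl | h1
    · rwa [Equiv.swap_apply_left]
    rcases eq_or_ne a x' with rfl | h2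
    · rwa [Equiv.swap_apply_right]
    · rwa [Equiv.swap_apply_of_ne_of_ne h1 h2]
  have hinj1 : Set.InjOn (fun z => f (Equiv.swap xs x' z)) ↑X := by
    intro a ha b hb hab
    have := hinj (by exact_mod_cast hswapX a ha) (by exact_mod_cast hswapX b hb) hab
    exact (Equiv.swap xs x').injective this
  have hcard' : (X.erase xs).card < c := by
    rw [← hcard]
    exact Finset.card_erase_lt_of_mem hxsX
  have hysn : f x' < n := (hval x' hx'X).1
  have hval1 : ∀ z ∈ X.erase xs, (fun z => f (Equiv.swap xs x' z)) z < n ∧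
      L ((fun z => f (Equiv.swap xs x' z)) z) ≤ z ∧ z ≤ U ((fun z => f (Equiv.swap xs x' z)) z) := by
    intro z hz
    have hzX : z ∈ X := Finset.mem_of_mem_erase hz
    have hzxs : z ≠ xs := Finset.ne_of_mem_erase hz
    simp only
    rcases eq_or_ne z x' with h | hzx'
    · subst h
      rw [Equiv.swap_apply_right]
      refine ⟨(hval xs hxsX).1, ?_, ?_⟩
      · calc L (f xs) ≤ L (f z) := hL _ _ (hley xs hxsX) hysn
          _ ≤ z := (hval z hzX).2.1
      · calc z ≤ xs := hxsmax z hzX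
          _ ≤ U (f xs) := (hval xs hxsX).2.2
    · rw [Equiv.swap_apply_of_ne_of_ne hzxs hzx']
      exact hval z hzX
  have hinj1' : Set.InjOn (fun z => f (Equiv.swap xs x' z)) ↑(X.erase xs) :=
    hinj1.mono (by simp [Finset.coe_erase, Set.diff_subset])
  obtain ⟨g', hg', hg'mono⟩ := ih (X.erase xs).card hcard' (X.erase xs) _ rfl hinj1' hval1
  have hg'ltys : ∀ x ∈ X.erase xs, g' x < f x' := by
    intro x hxX'
    obtain ⟨⟨x0, hx0, hfx0⟩, _, _⟩ := hg' x hxX'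
    have hx0X : Equiv.swap xs x' x0 ∈ X := hswapX x0 (Finset.mem_of_mem_erase hx0)
    have hle : f (Equiv.swap xs x' x0) ≤ f x' := hley _ hx0X
    rcases eq_or_lt_of_le hle with heq | hlt
    · exfalso
      have h3 : Equiv.swap xs x' x0 = x' :=
        hinj (by exact_mod_cast hx0X) (by exact_mod_cast hx'X) heq
      have h4 : x0 = xs := by
        have := congrArg (Equiv.swap xs x') h3
        rwa [Equiv.swap_apply_self, Equiv.swap_apply_right] at this
      exact (Finset.ne_of_mem_erase hx0) h4
    · rw [← hfx0] at *; exact hlt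
  refine ⟨fun z => if z = xs then f x' else g' z, ?_, ?_⟩
  · intro x hx
    rcases eq_or_ne x xs with hxxs | hxxs
    · subst hxxs
      simp only [if_pos rfl]
      refine ⟨⟨x', hx'X, rfl⟩, ?_, ?_⟩
      · calc L (f x') ≤ x' := (hval x' hx'X).2.1
          _ ≤ x := hxsmax x' hx'X
      · calc x ≤ U (f x) := (hval x hx).2.2
          _ ≤ U (f x') := hU _ _ (hley x hx) hysn
    · have hxX' : x ∈ X.erase xs := Finset.mem_erase.mpr ⟨hxxs, hx⟩
      simp only [if_neg hxxs]
      obtain ⟨⟨x0, hx0, hfx0⟩, h1, h2⟩ := hg' x hxX'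
      exact ⟨⟨Equiv.swap xs x' x0, hswapX x0 (Finset.mem_of_mem_erase hx0), hfx0⟩, h1, h2⟩
  · intro x hx y hy hxy
    rcases eq_or_ne y xs with hyxs | hyxs
    · subst hyxs
      have hxxs : x ≠ y := by omega
      simp only [if_pos rfl, if_neg hxxs]
      exact hg'ltys x (Finset.mem_erase.mpr ⟨hxxs, hx⟩)
    · have hxxs : x ≠ xs := by
        intro h
        have := hxsmax y hy
        omega
      simp only [if_neg hxxs, if_neg hyxs]
      exact hg'mono x (Finset.mem_erase.mpr ⟨hxxs, hx⟩) y (Finset.mem_erase.mpr ⟨hyxs, hy⟩) hxy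

end LPMaux

open LPMaux

/-- If `[P,Q]` has a proper `k × k` square at `i`, then the lattice path matroid of
`[B_i(P), B_i(Q)]`, where `B_i(P) = P_i + k` North steps and `B_i(Q) = Q_i + k` East
steps, is a minor of `M[P,Q]`. -/
theorem stmt_13 (P Q : List Bool) (m r k i : ℕ) (M MB : Matroid ℕ)
    (hM : IsLPM M P Q m r) (hsq : HasSquareAt P Q k i)
    (hproper : k + 1 ≤ i ∧ i ≤ m + r - k - 1)
    (hMB : IsLPM MB (P.take i ++ List.replicate k true)
      (Q.take i ++ List.replicate k false)
      (eCount (P.take i)) (nCount (P.take i) + k)) :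
    IsIsoMinorOf MB M := by
  classical
  obtain ⟨hpair, hE, hind⟩ := hM
  obtain ⟨hpairB, hEB, hindB⟩ := hMB
  have hlenP := hpair.lenP
  have hlenQ := hpair.lenQ
  have hnP := hpair.northP
  have hnQ := hpair.northQ
  have hQi : nCount (Q.take i) = nCount (P.take i) + k := hsq.2
  have hi1 : k + 1 ≤ i := hproper.1
  have hi2 : i ≤ m + r - k - 1 := hproper.2
  have hiLen : i ≤ m + r := by omega
  have hik_le : i + k ≤ m + r := by omega
  have hlenPi : (P.take i).length = i := by rw [List.length_take]; omega
  have hr'r : nCount (P.take i) + k ≤ r := by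
    rw [← hQi, ← hnQ]; exact nCount_le Q i
  have hmb : eCount (P.take i) + (nCount (P.take i) + k) = i + k := by
    have := count_len (P.take i); omega
  rw [hmb] at hEB
  -- interval facts
  have hlu : ∀ j, j < r → nu Q j ≤ nu P j := by
    intro j hj
    apply nu_le_of_count
    have h1 := (np_count P j (by rw [hnP]; exact hj)).2
    have h2 := hpair.notAbove (nu P j)
    omega
  have hu_mem : ∀ j, j < r → 1 ≤ nu P j ∧ nu P j ≤ m + r := by
    intro j hj
    have := np_pos P j (by rw [hnP]; exact hj); rwa [hlenP] at this
  have hCik : ∀ j, nCount (P.take i) + k ≤ j → j < r → i + k < nu P j := by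
    intro j h1 h2
    apply lt_nu_of_count P (by rw [hnP]; exact h2)
    have := nCount_take_add P i k
    omega
  have huPlow : ∀ j, j < nCount (P.take i) → nu P j = nu (P.take i) j :=
    fun j hj => nu_prefix P i j hj
  have huPhigh : ∀ j, nCount (P.take i) ≤ j → j < nCount (P.take i) + k →
      i + 1 + (j - nCount (P.take i)) ≤ nu P j := by
    intro j h1 h2
    have hjr : j < r := by omega
    have hbase : i + 1 ≤ nu P (nCount (P.take i)) := by
      have := lt_nu_of_count P (j := nCount (P.take i)) (t := i) (by rw [hnP]; omega) (le_refl _)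
      omega
    have hmono := nu_add_le P j (nCount (P.take i)) h1 (by rw [hnP]; exact hjr)
    omega
  have hlQpre : ∀ j, j < nCount (P.take i) + k → nu Q j = nu (Q.take i) j := by
    intro j hj; exact nu_prefix Q i j (by omega)
  have hlQle_i : ∀ j, j < nCount (P.take i) + k → nu Q j ≤ i := by
    intro j hj
    exact nu_le_of_count Q (by omega)
  -- the contract and delete sets
  set C : Set ℕ := (fun j => nu P j) '' (Set.Ico (nCount (P.take i) + k) r) with hCdef
  set D : Set ℕ := Set.Ioc (i + k) (m + r) \ C with hDdef
  have hCIoc : C ⊆ Set.Ioc (i + k) (m + r) := by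
    rintro y ⟨j, hj, rfl⟩
    exact ⟨hCik j hj.1 hj.2, (hu_mem j hj.2).2⟩
  have hCE : C ⊆ M.E := by
    rw [hE]; intro y hy
    have h := hCIoc hy
    rw [Set.mem_Ioc] at h
    exact Set.mem_Icc.mpr ⟨by omega, h.2⟩
  have hDE : D ⊆ M.E := by
    rw [hE]; intro y hy
    rw [hDdef] at hy
    have h := hy.1
    rw [Set.mem_Ioc] at h
    exact Set.mem_Icc.mpr ⟨by omega, h.2⟩
  have hCD : Disjoint C D := by
    rw [hDdef]; exact Set.disjoint_sdiff_right
  have hground : (M.E \ C) \ D = Set.Icc 1 (i + k) := by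
    rw [hE, hDdef]
    ext x
    simp only [Set.mem_diff, Set.mem_Icc, Set.mem_Ioc]
    constructor
    · rintro ⟨⟨⟨h1, h2⟩, hxC⟩, hxD⟩
      refine ⟨h1, ?_⟩
      by_contra h
      exact hxD ⟨⟨by omega, h2⟩, hxC⟩
    · rintro ⟨h1, h2⟩
      have hxC : x ∉ C := fun hx => by
        have := hCIoc hx; rw [Set.mem_Ioc] at this; omega
      exact ⟨⟨⟨h1, by omega⟩, hxC⟩, fun hx => by
        obtain ⟨⟨h3, _⟩, _⟩ := hx; omega⟩
  -- C is independent
  have hCval : ∀ j, j < r → nCount (P.take (nu P j - 1)) = j :=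
    fun j hj => (np_count P j (by rw [hnP]; exact hj)).1
  have hCindep : M.Indep C := by
    rw [hind]
    refine ⟨hCE, ⟨fun y => nCount (P.take (y - 1)), ?_, ?_⟩⟩
    · rintro a ⟨j1, hj1, rfl⟩ b ⟨j2, hj2, rfl⟩ hab
      simp only [hCval j1 hj1.2, hCval j2 hj2.2] at hab
      rw [hab]
    · rintro y ⟨j, hj, rfl⟩
      simp only [hCval j hj.2, nu_eq]
      exact ⟨hj.2, hlu j hj.2, le_refl _⟩
  -- direction 1 : MB indep → M indep of union
  have dir1 : ∀ X : Set ℕ, X ⊆ Set.Icc 1 (i + k) → MB.Indep X → M.Indep (X ∪ C) := by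
    intro X hX hXB
    obtain ⟨hXE', f, hfinj, hfval⟩ := (hindB X).mp hXB
    simp only [nu_eq] at hfval
    rw [hind]
    have hFX : ∀ x ∈ X, x ≤ i + k := fun x hx => (Set.mem_Icc.mp (hX hx)).2
    have hFC : ∀ y ∈ C, ¬ (y ≤ i + k) := fun y hy => by
      have := hCIoc hy; rw [Set.mem_Ioc] at this; omega
    refine ⟨?_, ⟨fun y => if y ≤ i + k then f y else nCount (P.take (y - 1)), ?_, ?_⟩⟩
    · rintro y (hy | hy)
      · rw [hE]
        have := Set.mem_Icc.mp (hX hy)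
        exact Set.mem_Icc.mpr ⟨this.1, by omega⟩
      · exact hCE hy
    · rintro a ha b hb hab
      simp only at hab
      rcases ha with ha | ha <;> rcases hb with hb | hb
      · rw [if_pos (hFX a ha), if_pos (hFX b hb)] at hab
        exact hfinj ha hb hab
      · exfalso
        rw [if_pos (hFX a ha), if_neg (hFC b hb)] at hab
        obtain ⟨j, hj, rfl⟩ := hb
        rw [hCval j hj.2] at hab
        have h5 : nCount (P.take i) + k ≤ j := hj.1
        have := (hfval a ha).1
        omega
      · exfalso
        rw [if_neg (hFC a ha), if_pos (hFX b hb)] at hab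
        obtain ⟨j, hj, rfl⟩ := ha
        rw [hCval j hj.2] at hab
        have h5 : nCount (P.take i) + k ≤ j := hj.1
        have := (hfval b hb).1
        omega
      · rw [if_neg (hFC a ha), if_neg (hFC b hb)] at hab
        obtain ⟨j1, hj1, rfl⟩ := ha
        obtain ⟨j2, hj2, rfl⟩ := hb
        rw [hCval j1 hj1.2, hCval j2 hj2.2] at hab
        rw [hab]
    · rintro y (hy | hy)
      · simp only
        rw [if_pos (hFX y hy)]
        obtain ⟨h1, h2, h3⟩ := hfval y hy
        simp only [nu_eq]
        refine ⟨by omega, ?_, ?_⟩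
        · rw [hlQpre (f y) h1]
          rw [nu_QB] at h2
          exact h2
        · by_cases hc : f y < nCount (P.take i)
          · rw [huPlow (f y) hc]
            rw [nu_PB_low P i k (f y) hc] at h3
            exact h3
          · have h4 := huPhigh (f y) (by omega) h1
            rw [nu_PB_high P i k (f y) (by omega) (by omega) h1] at h3
            omega
      · obtain ⟨j, hj, rfl⟩ := hy
        simp only
        rw [if_neg (hFC _ ⟨j, hj, rfl⟩)]
        simp only [hCval j hj.2, nu_eq]
        exact ⟨hj.2, hlu j hj.2, le_refl _⟩
  -- direction 2 : M indep of union → MB indep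
  have dir2 : ∀ X : Set ℕ, X ⊆ Set.Icc 1 (i + k) → M.Indep (X ∪ C) → MB.Indep X := by
    intro X hX hXI
    obtain ⟨hXE', f, hfinj, hfval⟩ := (hind _).mp hXI
    simp only [nu_eq] at hfval
    have hdisjXC : ∀ x ∈ X, x ∉ C := fun x hx hc => by
      have h1 := (Set.mem_Icc.mp (hX hx)).2
      have := hCIoc hc; rw [Set.mem_Ioc] at this; omega
    have hfC : ∀ y ∈ C, f y ∈ Set.Ico (nCount (P.take i) + k) r := by
      rintro y ⟨j, hj, rfl⟩
      have h := hfval _ (Set.mem_union_right _ ⟨j, hj, rfl⟩)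
      simp only at h
      have hj1 : nCount (P.take i) + k ≤ j := hj.1
      refine ⟨?_, h.1⟩
      by_contra hc
      push_neg at hc
      have hc' : f (nu P j) < nCount (P.take i) + k := hc
      have hfj : f (nu P j) < j := by omega
      have hlt := nu_lt_nu P hfj (by rw [hnP]; exact hj.2)
      have h3 := h.2.2
      omega
    have hCinj : Set.InjOn (fun j => nu P j) (Set.Ico (nCount (P.take i) + k) r) := by
      intro a ha b hb hab
      simp only [Set.mem_Ico] at ha hb
      simp only at hab
      by_contra hne
      rcases lt_or_gt_of_ne hne with h | h
      · have := nu_lt_nu P h (by rw [hnP]; exact hb.2); omega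
      · have := nu_lt_nu P h (by rw [hnP]; exact ha.2); omega
    have hCcard : C.ncard = r - (nCount (P.take i) + k) := by
      rw [hCdef, Set.ncard_image_of_injOn hCinj, ← Finset.coe_Ico, Set.ncard_coe_finset,
        Nat.card_Ico]
    have hCfin : C.Finite := ((Set.finite_Icc 1 (m + r)).subset (by
      intro y hy; have := hCIoc hy; rw [Set.mem_Ioc] at this
      exact Set.mem_Icc.mpr ⟨by omega, this.2⟩))
    have himg : f '' C = Set.Ico (nCount (P.take i) + k) r := by
      apply Set.eq_of_subset_of_ncard_le
      · rintro z ⟨y, hy, rfl⟩; exact hfC y hy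
      · rw [Set.ncard_image_of_injOn (hfinj.mono Set.subset_union_right), hCcard,
          ← Finset.coe_Ico, Set.ncard_coe_finset, Nat.card_Ico]
      · exact (Set.finite_Icc 0 r).subset (by
          intro z hz; rw [Set.mem_Ico] at hz; exact Set.mem_Icc.mpr ⟨by omega, by omega⟩)
    have hfX : ∀ x ∈ X, f x < nCount (P.take i) + k := by
      intro x hx
      have h := hfval x (Set.mem_union_left _ hx)
      by_contra hc
      push_neg at hc
      have hmem : f x ∈ Set.Ico (nCount (P.take i) + k) r := ⟨hc, h.1⟩
      rw [← himg] at hmem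
      obtain ⟨y, hyC, hyx⟩ := hmem
      have heq := hfinj (Set.mem_union_right _ hyC) (Set.mem_union_left _ hx) hyx
      exact hdisjXC x hx (heq ▸ hyC)
    have hXfin : X.Finite := (Set.finite_Icc 1 (i + k)).subset hX
    have hXcoe : ↑hXfin.toFinset = X := Set.Finite.coe_toFinset hXfin
    obtain ⟨g, hg, hgmono⟩ := rematch (fun j => nu Q j) (fun j => nu P j)
      (nCount (P.take i) + k)
      (fun a b hab hb => nu_mono Q hab (by rw [hnQ]; omega))
      (fun a b hab hb => nu_mono P hab (by rw [hnP]; omega))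
      hXfin.toFinset.card hXfin.toFinset f rfl
      (by rw [hXcoe]; exact hfinj.mono Set.subset_union_left)
      (by
        intro x hx
        rw [Set.Finite.mem_toFinset] at hx
        exact ⟨hfX x hx, (hfval x (Set.mem_union_left _ hx)).2.1,
          (hfval x (Set.mem_union_left _ hx)).2.2⟩)
    have hgmem : ∀ x ∈ X, g x < nCount (P.take i) + k := by
      intro x hx
      obtain ⟨⟨x0, hx0, hfx0⟩, _, _⟩ := hg x (hXfin.mem_toFinset.mpr hx)
      rw [Set.Finite.mem_toFinset] at hx0
      rw [← hfx0]
      exact hfX x0 hx0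
    rw [hindB]
    refine ⟨by rw [hEB]; exact hX,
      ⟨fun x => if x ≤ i then g x else max (g x) (nCount (P.take i) + (x - i - 1)), ?_, ?_⟩⟩
    · -- injectivity via strict monotonicity
      have hmono : ∀ x ∈ X, ∀ y ∈ X, x < y →
          (if x ≤ i then g x else max (g x) (nCount (P.take i) + (x - i - 1))) <
          (if y ≤ i then g y else max (g y) (nCount (P.take i) + (y - i - 1))) := by
        intro x hx y hy hxy
        have hgxy := hgmono x (hXfin.mem_toFinset.mpr hx) y (hXfin.mem_toFinset.mpr hy) hxy
        by_cases h1 : x ≤ i <;> by_cases h2 : y ≤ i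
        · rw [if_pos h1, if_pos h2]; exact hgxy
        · rw [if_pos h1, if_neg h2]
          exact lt_of_lt_of_le hgxy (le_max_left _ _)
        · omega
        · rw [if_neg h1, if_neg h2]
          exact max_lt_max hgxy (by omega)
      intro a ha b hb hab
      simp only at hab
      rcases lt_trichotomy a b with h | h | h
      · exact absurd hab (by have := hmono a ha b hb h; omega)
      · exact h
      · exact absurd hab (by have := hmono b hb a ha h; omega)
    · intro x hx
      have hx1 : 1 ≤ x := (Set.mem_Icc.mp (hX hx)).1
      have hxik : x ≤ i + k := (Set.mem_Icc.mp (hX hx)).2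
      obtain ⟨⟨x0, hx0, hfx0⟩, hgl, hgu⟩ := hg x (hXfin.mem_toFinset.mpr hx)
      have hgx : g x < nCount (P.take i) + k := hgmem x hx
      simp only [nu_eq]
      by_cases h1 : x ≤ i
      · rw [if_pos h1]
        refine ⟨hgx, ?_, ?_⟩
        · rw [nu_QB, ← hlQpre (g x) hgx]
          exact hgl
        · by_cases hc : g x < nCount (P.take i)
          · rw [nu_PB_low P i k (g x) hc, ← huPlow (g x) hc]
            exact hgu
          · rw [nu_PB_high P i k (g x) (by omega) (by omega) hgx]
            omega
      · rw [if_neg h1]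
        have hkpos : 1 ≤ k := by omega
        have hBle : nCount (P.take i) + (x - i - 1) < nCount (P.take i) + k := by omega
        refine ⟨by omega, ?_, ?_⟩
        · rw [nu_QB]
          rcases max_cases (g x) (nCount (P.take i) + (x - i - 1)) with ⟨hM1, _⟩ | ⟨hM1, _⟩
          · rw [hM1, ← hlQpre (g x) hgx]
            exact hgl
          · rw [hM1, ← hlQpre _ hBle]
            have := hlQle_i _ hBle
            omega
        · have hge : nCount (P.take i) ≤ max (g x) (nCount (P.take i) + (x - i - 1)) := by
            have := le_max_right (g x) (nCount (P.take i) + (x - i - 1)); omega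
          have hlt : max (g x) (nCount (P.take i) + (x - i - 1)) < nCount (P.take i) + k := by
            rcases max_cases (g x) (nCount (P.take i) + (x - i - 1)) with ⟨hM1, _⟩ | ⟨hM1, _⟩ <;>
              omega
          rw [nu_PB_high P i k _ (by omega) hge hlt]
          have := le_max_right (g x) (nCount (P.take i) + (x - i - 1))
          omega
  -- assemble
  refine ⟨(M✶ ↾ (M.E \ C))✶ ↾ ((M.E \ C) \ D), ⟨C, D, hCE, hDE, hCD, rfl⟩, id, ?_, ?_⟩
  · rw [Matroid.restrict_ground_eq, hground, hEB]
    exact Set.bijOn_id _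
  · intro X hXsub
    rw [Matroid.restrict_ground_eq, hground] at hXsub
    rw [Set.image_id]
    rw [Matroid.restrict_indep_iff, contract_indep_iff' hCindep]
    constructor
    · rintro ⟨⟨_, hXC⟩, _⟩
      exact dir2 X hXsub hXC
    · intro hXB
      refine ⟨⟨?_, dir1 X hXsub hXB⟩, by rw [hground]; exact hXsub⟩
      rw [← hground] at hXsub
      exact hXsub.trans Set.diff_subset
end

section
/- Let [P,Q] be a path presentation with a proper k×k square at position i, and let T_i(P) = k East steps + P_i', T_i(Q) = k North steps + Q_i', where P_i', Q_i' are the suffixes of P, Q after position i. Then M[T_i(P), T_i(Q)] is a minor of M[P,Q]. -/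
open Matroid

/- ===== auxiliary lemmas ===== -/

lemma np_nil : northPositions [] = [] := rfl

lemma np_cons (b : Bool) (w : List Bool) :
    northPositions (b :: w) = (if b then [1] else []) ++ (northPositions w).map (· + 1) := by
  unfold northPositions
  rw [List.length_cons, List.range_succ_eq_map]
  rw [List.filter_cons]
  simp only [List.getD_cons_zero]
  rw [List.filter_map]
  have h1 : ((b :: w).getD · false) ∘ Nat.succ = (w.getD · false) := by
    funext j; simp [List.getD_cons_succ]
  rw [h1]
  cases b <;> simp [Function.comp, Nat.succ_eq_add_one, List.map_map, Nat.add_comm] <;> omega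

lemma np_length (w : List Bool) : (northPositions w).length = nCount w := by
  induction w with
  | nil => rfl
  | cons b w ih =>
    rw [np_cons, List.length_append, List.length_map, ih]
    cases b <;> simp [nCount, List.count_cons] <;> omega

lemma np_append (u v : List Bool) :
    northPositions (u ++ v) = northPositions u ++ (northPositions v).map (· + u.length) := by
  induction u with
  | nil => simp [np_nil, List.map_id']
  | cons b u ih =>
    have hm : ((northPositions v).map (· + u.length)).map (· + 1)
        = (northPositions v).map (· + (b :: u).length) := by
      rw [List.map_map]
      apply List.map_congr_left
      intro x _
      simp only [Function.comp, List.length_cons]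
      omega
    rw [List.cons_append, np_cons, np_cons, ih, List.map_append, hm, List.append_assoc]

lemma np_mem_bounds {w : List Bool} {x : ℕ} (hx : x ∈ northPositions w) :
    1 ≤ x ∧ x ≤ w.length := by
  unfold northPositions at hx
  simp only [List.mem_map, List.mem_filter, List.mem_range] at hx
  obtain ⟨j, ⟨hj, -⟩, rfl⟩ := hx
  omega

lemma np_sorted (w : List Bool) : List.Pairwise (· < ·) (northPositions w) := by
  unfold northPositions
  exact List.Pairwise.map _ (fun a b h => by omega)
    (((List.pairwise_lt_range)).filter _)

/-- `npd w t` is the (1-indexed) position of the `t`-th North step of `w`. -/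
def npd (w : List Bool) (t : ℕ) : ℕ := (northPositions w).getD t 0

lemma npd_def (w : List Bool) (t : ℕ) : (northPositions w).getD t 0 = npd w t := rfl

lemma npd_mem {w : List Bool} {t : ℕ} (ht : t < nCount w) : npd w t ∈ northPositions w := by
  rw [← np_length] at ht
  rw [npd, List.getD_eq_getElem _ _ ht]
  exact List.getElem_mem _

lemma npd_bounds {w : List Bool} {t : ℕ} (ht : t < nCount w) :
    1 ≤ npd w t ∧ npd w t ≤ w.length :=
  np_mem_bounds (npd_mem ht)

lemma npd_strictMono {w : List Bool} {s t : ℕ} (hst : s < t) (ht : t < nCount w) :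
    npd w s < npd w t := by
  rw [← np_length] at ht
  have hs : s < (northPositions w).length := lt_trans hst ht
  rw [npd, npd, List.getD_eq_getElem _ _ hs, List.getD_eq_getElem _ _ ht]
  exact List.pairwise_iff_getElem.mp (np_sorted w) s t hs ht hst

lemma npd_mono {w : List Bool} {s t : ℕ} (hst : s ≤ t) (ht : t < nCount w) :
    npd w s ≤ npd w t := by
  rcases eq_or_lt_of_le hst with rfl | h
  · exact le_rfl
  · exact le_of_lt (npd_strictMono h ht)

lemma count_take_add_drop (w : List Bool) (j : ℕ) :
    nCount (w.take j) + nCount (w.drop j) = nCount w := by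
  unfold nCount
  rw [← List.count_append, List.take_append_drop]

lemma nCount_take_le (w : List Bool) (j : ℕ) : nCount (w.take j) ≤ nCount w :=
  List.Sublist.count_le _ (List.take_sublist _ _)

lemma eCount_add_nCount (w : List Bool) : eCount w + nCount w = w.length := by
  induction w with
  | nil => rfl
  | cons b w ih =>
    unfold eCount nCount at *
    cases b
    · rw [List.count_cons, List.count_cons]; simp; omega
    · rw [List.count_cons, List.count_cons]; simp; omega

/-- The key bridge between positions of North steps and counts in prefixes. -/
lemma npd_le_iff {w : List Bool} {t j : ℕ} (ht : t < nCount w) :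
    npd w t ≤ j ↔ t + 1 ≤ nCount (w.take j) := by
  rcases le_or_gt j w.length with hj | hj
  swap
  · have h1 : w.take j = w := List.take_of_length_le (le_of_lt hj)
    rw [h1]
    exact ⟨fun _ => by omega, fun _ => le_trans (npd_bounds ht).2 (le_of_lt hj)⟩
  have hdecomp : northPositions w
      = northPositions (w.take j) ++ (northPositions (w.drop j)).map (· + j) := by
    conv_lhs => rw [← List.take_append_drop j w]
    rw [np_append, List.length_take, min_eq_left hj]
  constructor
  · intro hle
    by_contra hc
    push_neg at hc
    have hc' : nCount (w.take j) ≤ t := by omega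
    have hlen : (northPositions (w.take j)).length = nCount (w.take j) := np_length _
    have heq : npd w t
        = ((northPositions (w.drop j)).map (· + j)).getD (t - nCount (w.take j)) 0 := by
      rw [npd, hdecomp, List.getD_append_right _ _ _ _ (by omega)]
      congr 1; omega
    have ht2 : t - nCount (w.take j) < nCount (w.drop j) := by
      have := count_take_add_drop w j; omega
    have ht3 : t - nCount (w.take j) < ((northPositions (w.drop j)).map (· + j)).length := by
      rw [List.length_map, np_length]; exact ht2
    rw [heq, List.getD_eq_getElem _ _ ht3, List.getElem_map] at hle
    have hmem : (northPositions (w.drop j))[t - nCount (w.take j)]'(by rwa [np_length]) ∈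
        northPositions (w.drop j) := List.getElem_mem _
    have := (np_mem_bounds hmem).1
    omega
  · intro hcount
    have ht' : t < nCount (w.take j) := by omega
    have heq : npd w t = npd (w.take j) t := by
      rw [npd, npd, hdecomp, List.getD_append _ _ _ _ (by rw [np_length]; omega)]
    rw [heq]
    exact le_trans (npd_bounds ht').2 (by rw [List.length_take]; omega)

lemma nCount_take_npd {w : List Bool} {s : ℕ} (hs : s < nCount w) :
    nCount (w.take (npd w s)) = s + 1 := by
  have h1 : s + 1 ≤ nCount (w.take (npd w s)) := (npd_le_iff hs).mp le_rfl
  rcases le_or_gt (nCount (w.take (npd w s))) (s+1) with h | h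
  · omega
  · exfalso
    have hs1 : s + 1 < nCount w := lt_of_lt_of_le h (nCount_take_le _ _)
    have h2 : npd w (s+1) ≤ npd w s := (npd_le_iff hs1).mpr (by omega)
    have := npd_strictMono (by omega : s < s + 1) hs1
    omega

lemma npd_append_left {u v : List Bool} {c t : ℕ} (hc : nCount u = c) (ht : t < c) :
    npd (u ++ v) t = npd u t := by
  rw [npd, npd, np_append, List.getD_append _ _ _ _ (by rw [np_length, hc]; exact ht)]

lemma npd_append_right {u v : List Bool} {c t : ℕ} (hc : nCount u = c) (h1 : c ≤ t)
    (h2 : t < c + nCount v) :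
    npd (u ++ v) t = npd v (t - c) + u.length := by
  rw [npd, npd, np_append,
    List.getD_append_right _ _ _ _ (by rw [np_length, hc]; exact h1), np_length, hc]
  have ht : t - c < (northPositions v).length := by rw [np_length]; omega
  rw [List.getD_eq_getElem _ _ (by simpa using ht), List.getElem_map,
    List.getD_eq_getElem _ _ ht]

lemma nCount_replicate_false (k : ℕ) : nCount (List.replicate k false) = 0 := by
  simp [nCount, List.count_replicate]

lemma nCount_replicate_true (k : ℕ) : nCount (List.replicate k true) = k := by
  simp [nCount, List.count_replicate]

lemma np_replicate_true (k : ℕ) :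
    northPositions (List.replicate k true) = (List.range k).map (· + 1) := by
  induction k with
  | zero => rfl
  | succ k ih =>
    rw [List.replicate_succ, np_cons, ih, List.range_succ_eq_map]
    simp only [if_true, List.map_cons, List.map_map, List.cons_append, List.nil_append,
      List.singleton_append]

lemma npd_replicate_true {k t : ℕ} (ht : t < k) :
    npd (List.replicate k true) t = t + 1 := by
  rw [npd, np_replicate_true]
  have h : t < ((List.range k).map (· + 1)).length := by simpa using ht
  rw [List.getD_eq_getElem _ _ h, List.getElem_map, List.getElem_range]

open Matroid in
lemma contract_aux {M : Matroid ℕ} {C X : Set ℕ} (hC : M.Indep C) (hX : X ⊆ M.E \ C) :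
    (∃ B, M✶.IsBasis B (M.E \ C) ∧ Disjoint X B) ↔ M.Indep (X ∪ C) := by
  constructor
  · rintro ⟨B, hB, hdisj⟩
    have hsp : M✶.Spanning (M.E \ C) := by
      obtain ⟨B', hB', hCB'⟩ := hC.exists_isBase_superset
      exact (hB'.compl_isBase_dual).spanning_of_superset
        (Set.diff_subset_diff_right hCB') (by simp [Set.diff_subset])
    have hBsp : M✶.Spanning B := by
      rw [Matroid.spanning_iff_closure_eq (hB.indep.subset_ground)]
      rw [hB.closure_eq_closure]
      rwa [Matroid.spanning_iff_closure_eq (by simp [Set.diff_subset])] at hsp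
    obtain ⟨B₀, hB₀, hB₀B⟩ := hBsp.exists_isBase_subset
    have hbase : M.IsBase (M.E \ B₀) := hB₀.compl_isBase_of_dual
    apply hbase.indep.subset
    rw [Set.union_subset_iff]
    constructor
    · intro x hx
      exact ⟨(hX hx).1, fun hmem => hdisj.ne_of_mem hx (hB₀B hmem) rfl⟩
    · intro c hc
      refine ⟨hC.subset_ground hc, fun hmem => ?_⟩
      exact (hB.subset (hB₀B hmem)).2 hc
  · intro h
    obtain ⟨B', hB', hsub⟩ := h.exists_isBase_superset
    refine ⟨M.E \ B', ?_, ?_⟩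
    · rw [Matroid.isBasis_iff (by simp [Set.diff_subset] : M.E \ C ⊆ M✶.E)]
      refine ⟨(hB'.compl_isBase_dual).indep, Set.diff_subset_diff_right
        ((Set.subset_union_right).trans hsub), fun J hJ hBJ _ => ?_⟩
      exact (hB'.compl_isBase_dual).eq_of_subset_indep hJ hBJ
    · exact Set.disjoint_left.mpr fun x hx hmem =>
        hmem.2 (hsub (Set.mem_union_left _ hx))

open Matroid in
lemma minor_indep_iff {M : Matroid ℕ} {C E₀ : Set ℕ} (hC : M.Indep C)
    (hE₀ : E₀ ⊆ M.E \ C) (X : Set ℕ) :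
    (((M✶ ↾ (M.E \ C))✶) ↾ E₀).Indep X ↔ X ⊆ E₀ ∧ M.Indep (X ∪ C) := by
  rw [Matroid.restrict_indep_iff, Matroid.dual_indep_iff_exists']
  have hg : (M✶ ↾ (M.E \ C)).E = M.E \ C := by simp
  constructor
  · rintro ⟨⟨hXE, B, hB, hdisj⟩, hXE₀⟩
    refine ⟨hXE₀, (contract_aux hC (hXE₀.trans hE₀)).mp ⟨B, ?_, hdisj⟩⟩
    rwa [Matroid.isBase_restrict_iff (by simp [Set.diff_subset] : M.E \ C ⊆ M✶.E)] at hB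
  · rintro ⟨hXE₀, hind⟩
    obtain ⟨B, hB, hdisj⟩ := (contract_aux hC (hXE₀.trans hE₀)).mpr hind
    refine ⟨⟨by rw [hg]; exact hXE₀.trans hE₀, B, ?_, hdisj⟩, hXE₀⟩
    rwa [Matroid.isBase_restrict_iff (by simp [Set.diff_subset] : M.E \ C ⊆ M✶.E)]

/-- The isomorphism map from the minor of `M[P,Q]` to `M[T_i(P),T_i(Q)]`. -/
def phiMap (Q : List Bool) (i k a x : ℕ) : ℕ :=
  if x ≤ i then nCount (Q.take x) - a else x - i + k

/-- The inverse of `phiMap`. -/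
def psiMap (Q : List Bool) (i k a y : ℕ) : ℕ :=
  if y ≤ k then npd Q (a + (y - 1)) else y + i - k

/- ===== end auxiliary lemmas ===== -/

/-- If `[P,Q]` has a proper `k × k` square at `i`, then the lattice path matroid of
`[T_i(P), T_i(Q)]`, where `T_i(P) = k` East steps `+ P_i'` and `T_i(Q) = k` North
steps `+ Q_i'`, is a minor of `M[P,Q]`. -/
theorem stmt_14 (P Q : List Bool) (m r k i : ℕ) (M MT : Matroid ℕ)
    (hM : IsLPM M P Q m r) (hsq : HasSquareAt P Q k i)
    (hproper : k + 1 ≤ i ∧ i ≤ m + r - k - 1)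
    (hMT : IsLPM MT (List.replicate k false ++ P.drop i)
      (List.replicate k true ++ Q.drop i)
      (k + eCount (P.drop i)) (nCount (P.drop i))) :
    IsIsoMinorOf MT M := by
  obtain ⟨hLP, hME, hMind⟩ := hM
  obtain ⟨hLPT, hMTE, hMTind⟩ := hMT
  obtain ⟨hki, hitop⟩ := hproper
  have hnP : nCount P = r := hLP.northP
  have hnQ : nCount Q = r := hLP.northQ
  have hlenP : P.length = m + r := hLP.lenP
  have hlenQ : Q.length = m + r := hLP.lenQ
  have him : i ≤ m + r := by omega
  set a := nCount (P.take i) with ha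
  set r' := nCount (P.drop i) with hr'
  have hQtake : nCount (Q.take i) = a + k := hsq.2
  have hak : a + k ≤ r := by
    calc a + k = nCount (Q.take i) := hQtake.symm
    _ ≤ nCount Q := nCount_take_le _ _
    _ = r := hnQ
  have har' : a + r' = r := by rw [ha, hr', count_take_add_drop, hnP]
  have hQd : nCount (Q.drop i) + k = r' := by
    have h := count_take_add_drop Q i
    rw [hQtake, hnQ] at h
    omega
  -- basic monotonicity facts about the interval endpoints
  have hlq_lt : ∀ s t, s < t → t < r → npd Q s < npd Q t := fun s t h ht =>
    npd_strictMono h (by rw [hnQ]; exact ht)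
  have hlq_le : ∀ s t, s ≤ t → t < r → npd Q s ≤ npd Q t := fun s t h ht =>
    npd_mono h (by rw [hnQ]; exact ht)
  have hlq_bds : ∀ t, t < r → 1 ≤ npd Q t ∧ npd Q t ≤ m + r := fun t ht => by
    have := npd_bounds (w := Q) (t := t) (by rw [hnQ]; exact ht)
    omega
  -- splitting positions at i
  have hPsplit : ∀ t, t < r' → npd P (a + t) = npd (P.drop i) t + i := by
    intro t ht
    conv_lhs => rw [show P = P.take i ++ P.drop i from (List.take_append_drop i P).symm]
    rw [npd_append_right ha.symm (by omega) (by omega)]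
    rw [show a + t - a = t from by omega, List.length_take, hlenP, min_eq_left him]
  have hQsplit : ∀ s, s + k < r' → npd Q (a + k + s) = npd (Q.drop i) s + i := by
    intro s hs
    conv_lhs => rw [show Q = Q.take i ++ Q.drop i from (List.take_append_drop i Q).symm]
    rw [npd_append_right hQtake (by omega) (by omega)]
    rw [show a + k + s - (a + k) = s from by omega, List.length_take, hlenQ, min_eq_left him]
  have hlq_le_i : ∀ t, t < a + k → npd Q t ≤ i := by
    intro t ht
    conv_lhs => rw [show Q = Q.take i ++ Q.drop i from (List.take_append_drop i Q).symm]
    rw [npd_append_left hQtake ht]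
    refine le_trans (npd_bounds (by rw [hQtake]; exact ht)).2 ?_
    rw [List.length_take]; omega
  have hupT : ∀ t, t < r' →
      npd (List.replicate k false ++ P.drop i) t = npd (P.drop i) t + k := by
    intro t ht
    rw [npd_append_right (nCount_replicate_false k) (by omega) (by omega)]
    simp
  have hltT_lo : ∀ t, t < k →
      npd (List.replicate k true ++ Q.drop i) t = t + 1 := by
    intro t ht
    rw [npd_append_left (nCount_replicate_true k) ht]
    exact npd_replicate_true ht
  have hltT_hi : ∀ s, s + k < r' →
      npd (List.replicate k true ++ Q.drop i) (k + s) = npd (Q.drop i) s + k := by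
    intro s hs
    rw [npd_append_right (nCount_replicate_true k) (by omega) (by omega)]
    rw [show k + s - k = s from by omega]
    simp
  have hqd_pos : ∀ s, s + k < r' → 1 ≤ npd (Q.drop i) s := by
    intro s hs
    exact (npd_bounds (by omega : s < nCount (Q.drop i))).1
  have hbrQP : ∀ t, t < r → npd Q t ≤ npd P t := by
    intro t ht
    have h1 : t + 1 ≤ nCount (P.take (npd P t)) :=
      (npd_le_iff (by rw [hnP]; exact ht)).mp le_rfl
    have h2 := hLP.notAbove (npd P t)
    exact (npd_le_iff (by rw [hnQ]; exact ht)).mpr (le_trans h1 h2)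
  have hcount_lq : ∀ s, s < r → nCount (Q.take (npd Q s)) = s + 1 := fun s hs =>
    nCount_take_npd (by rw [hnQ]; exact hs)
  -- the contracted, deleted and surviving sets
  set C : Set ℕ := npd Q '' Set.Iio a with hCdef
  set S : Set ℕ := npd Q '' Set.Ico a (a + k) with hSdef
  set E₀ : Set ℕ := S ∪ Set.Icc (i+1) (m+r) with hE₀def
  set D : Set ℕ := Set.Icc 1 i \ (C ∪ S) with hDdef
  have hCle : ∀ x ∈ C, 1 ≤ x ∧ x ≤ i := by
    rintro x ⟨s, hs, rfl⟩
    rw [Set.mem_Iio] at hs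
    exact ⟨(hlq_bds s (by omega)).1, hlq_le_i s (by omega)⟩
  have hSle : ∀ x ∈ S, 1 ≤ x ∧ x ≤ i := by
    rintro x ⟨s, hs, rfl⟩
    rw [Set.mem_Ico] at hs
    exact ⟨(hlq_bds s (by omega)).1, hlq_le_i s (by omega)⟩
  have hCS : ∀ x ∈ S, x ∉ C := by
    rintro x ⟨t, ht, rfl⟩ ⟨s, hs, heq⟩
    rw [Set.mem_Ico] at ht
    rw [Set.mem_Iio] at hs
    have := hlq_lt s t (by omega) (by omega)
    omega
  have hCE : C ⊆ M.E := by
    rw [hME]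
    intro x hx
    have := hCle x hx
    exact Set.mem_Icc.mpr ⟨this.1, by omega⟩
  have hDE : D ⊆ M.E := by
    rw [hME]
    rintro x ⟨hx, -⟩
    rw [Set.mem_Icc] at hx
    exact Set.mem_Icc.mpr ⟨hx.1, by omega⟩
  have hCD : Disjoint C D := Set.disjoint_left.mpr fun x hxC hxD => hxD.2 (Or.inl hxC)
  have hE₀sub : E₀ ⊆ M.E \ C := by
    rintro x (hx | hx)
    · have hb := hSle x hx
      exact ⟨hME ▸ Set.mem_Icc.mpr ⟨hb.1, by omega⟩, hCS x hx⟩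
    · rw [Set.mem_Icc] at hx
      refine ⟨hME ▸ Set.mem_Icc.mpr ⟨by omega, hx.2⟩, fun hxC => ?_⟩
      have := (hCle x hxC).2
      omega
  have hE₀cases : ∀ x ∈ E₀, (∃ t, (a ≤ t ∧ t < a + k) ∧ npd Q t = x)
      ∨ (i + 1 ≤ x ∧ x ≤ m + r) := by
    rintro x (hx | hx)
    · obtain ⟨t, ht, rfl⟩ := hx
      rw [Set.mem_Ico] at ht
      exact Or.inl ⟨t, ht, rfl⟩
    · exact Or.inr (Set.mem_Icc.mp hx)
  have hground : (M.E \ C) \ D = E₀ := by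
    ext x
    constructor
    · rintro ⟨⟨hxE, hxC⟩, hxD⟩
      rw [hME, Set.mem_Icc] at hxE
      by_cases hxi : x ≤ i
      · have hcs : x ∈ C ∪ S := by
          by_contra hcs
          exact hxD ⟨Set.mem_Icc.mpr ⟨hxE.1, hxi⟩, hcs⟩
        rcases hcs with h | h
        · exact absurd h hxC
        · exact Or.inl h
      · exact Or.inr (Set.mem_Icc.mpr ⟨by omega, hxE.2⟩)
    · intro hx
      refine ⟨hE₀sub hx, fun hxD => ?_⟩
      rcases hE₀cases x hx with ⟨t, ht, rfl⟩ | h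
      · exact hxD.2 (Or.inr ⟨t, Set.mem_Ico.mpr ht, rfl⟩)
      · have hx1 := hxD.1
        rw [Set.mem_Icc] at hx1
        omega
  -- C is independent
  have hCindep : M.Indep C := by
    rw [hMind]
    refine ⟨hCE, fun x => nCount (Q.take x) - 1, ?_, ?_⟩
    · rintro x ⟨s, hs, rfl⟩ y ⟨s', hs', rfl⟩ hxy
      rw [Set.mem_Iio] at hs hs'
      beta_reduce at hxy
      rw [hcount_lq s (by omega), hcount_lq s' (by omega)] at hxy
      have : s = s' := by omega
      rw [this]
    · rintro x ⟨s, hs, rfl⟩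
      rw [Set.mem_Iio] at hs
      beta_reduce
      rw [hcount_lq s (by omega), show s + 1 - 1 = s from by omega]
      simp only [npd_def]
      exact ⟨by omega, le_refl _, hbrQP s (by omega)⟩
  -- the iso map facts
  have hφS : ∀ j, j < k → phiMap Q i k a (npd Q (a + j)) = j + 1 := by
    intro j hj
    have hx_le : npd Q (a + j) ≤ i := hlq_le_i _ (by omega)
    rw [phiMap, if_pos hx_le, hcount_lq (a + j) (by omega)]
    omega
  have hφtail : ∀ x, i < x → phiMap Q i k a x = x - i + k := by
    intro x hx
    rw [phiMap, if_neg (by omega)]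
  have hψφ : ∀ x ∈ E₀, psiMap Q i k a (phiMap Q i k a x) = x := by
    intro x hx
    rcases hE₀cases x hx with ⟨t, ht, rfl⟩ | h
    · have hj := hφS (t - a) (by omega)
      rw [show a + (t - a) = t from by omega] at hj
      rw [hj, psiMap, if_pos (by omega)]
      congr 1
      omega
    · rw [hφtail x (by omega), psiMap, if_neg (by omega)]
      omega
  have hnT : k + eCount (P.drop i) + r' = k + (m + r - i) := by
    have h := eCount_add_nCount (P.drop i)
    rw [List.length_drop, hlenP] at h
    omega
  have hMTE' : MT.E = Set.Icc 1 (k + (m + r - i)) := by rw [hMTE, hnT]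
  have hmaps : ∀ x ∈ E₀, phiMap Q i k a x ∈ Set.Icc 1 (k + (m + r - i)) := by
    intro x hx
    rcases hE₀cases x hx with ⟨t, ht, rfl⟩ | h
    · have hj := hφS (t - a) (by omega)
      rw [show a + (t - a) = t from by omega] at hj
      rw [hj]
      exact Set.mem_Icc.mpr ⟨by omega, by omega⟩
    · rw [hφtail x (by omega)]
      exact Set.mem_Icc.mpr ⟨by omega, by omega⟩
  -- assemble the minor and the isomorphism
  refine ⟨((M✶ ↾ (M.E \ C))✶) ↾ ((M.E \ C) \ D), ⟨C, D, hCE, hDE, hCD, rfl⟩,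
    phiMap Q i k a, ?_, ?_⟩
  · -- bijection on ground sets
    rw [Matroid.restrict_ground_eq, hground, hMTE']
    refine ⟨fun x hx => hmaps x hx, fun x hx y hy h => ?_, fun y hy => ?_⟩
    · rw [← hψφ x hx, ← hψφ y hy, h]
    · rw [Set.mem_Icc] at hy
      by_cases hyk : y ≤ k
      · refine ⟨npd Q (a + (y-1)), Or.inl ⟨a + (y-1), Set.mem_Ico.mpr ⟨by omega, by omega⟩, rfl⟩, ?_⟩
        rw [hφS (y-1) (by omega)]
        omega
      · refine ⟨y + i - k, Or.inr (Set.mem_Icc.mpr ⟨by omega, by omega⟩), ?_⟩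
        rw [hφtail _ (by omega)]
        omega
  -- independence is preserved
  intro X hX
  rw [Matroid.restrict_ground_eq, hground] at hX
  rw [hground, minor_indep_iff hCindep hE₀sub X, hMind, hMTind]
  simp only [IsPartialTransversal, npd_def]
  have hXC : ∀ x ∈ X, x ∉ C := by
    intro x hx hxC
    rcases hE₀cases x (hX hx) with ⟨t, ht, rfl⟩ | h
    · exact hCS _ ⟨t, Set.mem_Ico.mpr ht, rfl⟩ hxC
    · have := (hCle x hxC).2
      omega
  constructor
  · rintro ⟨-, -, f, hinj, hf⟩
    have hCsubXC : C ⊆ X ∪ C := Set.subset_union_right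
    have hClt : ∀ c ∈ C, f c < a := by
      rintro c ⟨s, hs, rfl⟩
      rw [Set.mem_Iio] at hs
      obtain ⟨hfr, hlow, -⟩ := hf _ (hCsubXC ⟨s, Set.mem_Iio.mpr hs, rfl⟩)
      by_contra hge
      push_neg at hge
      have := hlq_lt s _ (by omega) hfr
      omega
    have hIiocard : (Set.Iio a : Set ℕ).ncard = a := by
      rw [← Finset.coe_Iio, Set.ncard_coe_finset, Nat.card_Iio]
    have hlqinj : Set.InjOn (npd Q) (Set.Iio a) := by
      intro s hs t ht hst
      rw [Set.mem_Iio] at hs ht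
      by_contra hne
      rcases lt_or_gt_of_ne hne with h | h
      · exact absurd hst (ne_of_lt (hlq_lt _ _ h (by omega)))
      · exact absurd hst.symm (ne_of_lt (hlq_lt _ _ h (by omega)))
    have hCcard : C.ncard = a := by
      rw [hCdef, Set.ncard_image_of_injOn hlqinj, hIiocard]
    have himg : f '' C = Set.Iio a := by
      apply Set.eq_of_subset_of_ncard_le
      · rintro y ⟨c, hc, rfl⟩
        exact Set.mem_Iio.mpr (hClt c hc)
      · rw [Set.ncard_image_of_injOn (hinj.mono hCsubXC), hCcard, hIiocard]
      · exact Set.finite_Iio a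
    have hfa : ∀ x ∈ X, a ≤ f x := by
      intro x hx
      by_contra h
      push_neg at h
      have hmem : f x ∈ f '' C := himg ▸ Set.mem_Iio.mpr h
      obtain ⟨c, hc, hcx⟩ := hmem
      have : c = x := hinj (hCsubXC hc) (Set.mem_union_left _ hx) hcx
      exact hXC x hx (this ▸ hc)
    refine ⟨fun y hy => ?_, fun y => f (psiMap Q i k a y) - a, ?_, ?_⟩
    · obtain ⟨x, hx, rfl⟩ := hy
      rw [hMTE']
      exact hmaps x (hX hx)
    · rintro y ⟨x, hx, rfl⟩ y' ⟨x', hx', rfl⟩ h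
      beta_reduce at h
      rw [hψφ x (hX hx), hψφ x' (hX hx')] at h
      have h1 : a ≤ f x := hfa x hx
      have h2 : a ≤ f x' := hfa x' hx'
      have : f x = f x' := by omega
      rw [hinj (Set.mem_union_left _ hx) (Set.mem_union_left _ hx') this]
    · rintro y ⟨x, hx, rfl⟩
      beta_reduce
      rw [hψφ x (hX hx)]
      obtain ⟨hfr, hlow, hupp⟩ := hf x (Set.mem_union_left _ hx)
      have hax : a ≤ f x := hfa x hx
      refine ⟨by omega, ?_⟩
      rcases hE₀cases x (hX hx) with ⟨tt, htt, hxeq⟩ | hIcc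
      · subst hxeq
        have hy : phiMap Q i k a (npd Q tt) = (tt - a) + 1 := by
          have := hφS (tt - a) (by omega)
          rwa [show a + (tt - a) = tt from by omega] at this
        rw [hy]
        have htk : f (npd Q tt) - a < k := by
          by_contra hge
          push_neg at hge
          have := hlq_lt tt (f (npd Q tt)) (by omega) hfr
          omega
        have htle : f (npd Q tt) - a ≤ tt - a := by
          by_contra hgt
          push_neg at hgt
          have := hlq_lt tt (f (npd Q tt)) (by omega) hfr
          omega
        constructor
        · rw [hltT_lo _ htk]
          omega
        · rw [hupT _ (by omega)]
          omega
      · rw [hφtail x (by omega)]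
        have hupP := hPsplit (f x - a) (by omega)
        rw [show a + (f x - a) = f x from by omega] at hupP
        constructor
        · by_cases htk : f x - a < k
          · rw [hltT_lo _ htk]
            omega
          · push_neg at htk
            have hlt2 := hltT_hi (f x - a - k) (by omega)
            rw [show k + (f x - a - k) = f x - a from by omega] at hlt2
            rw [hlt2]
            have hlq2 := hQsplit (f x - a - k) (by omega)
            rw [show a + k + (f x - a - k) = f x from by omega] at hlq2
            omega
        · rw [hupT _ (by omega)]
          omega
  · rintro ⟨-, g, hginj, hg⟩
    have hXCE : X ∪ C ⊆ M.E :=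
      Set.union_subset (fun x hx => (hE₀sub (hX hx)).1) hCE
    set f : ℕ → ℕ := fun x =>
      if x ≤ i ∧ nCount (Q.take x) ≤ a then nCount (Q.take x) - 1
      else a + g (phiMap Q i k a x) with hfdef
    have hfC : ∀ s, s < a → f (npd Q s) = s := by
      intro s hs
      have h1 : npd Q s ≤ i := hlq_le_i s (by omega)
      have h2 : nCount (Q.take (npd Q s)) = s + 1 := hcount_lq s (by omega)
      simp only [hfdef]
      rw [if_pos ⟨h1, by omega⟩, h2]
      omega
    have hfX : ∀ x ∈ X, f x = a + g (phiMap Q i k a x) := by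
      intro x hx
      rcases hE₀cases x (hX hx) with ⟨t, ht, rfl⟩ | hIcc
      · simp only [hfdef]
        rw [if_neg]
        rintro ⟨-, h2⟩
        rw [hcount_lq t (by omega)] at h2
        omega
      · simp only [hfdef]
        rw [if_neg]
        rintro ⟨h1, -⟩
        omega
    refine ⟨hX, ⟨hXCE, f, ?_, ?_⟩⟩
    · rintro z (hz | ⟨s, hs, rfl⟩) z' (hz' | ⟨s', hs', rfl⟩) heq
      · rw [hfX z hz, hfX z' hz'] at heq
        have hgz := hginj ⟨z, hz, rfl⟩ ⟨z', hz', rfl⟩ (by omega)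
        rw [← hψφ z (hX hz), ← hψφ z' (hX hz'), hgz]
      · rw [Set.mem_Iio] at hs'
        rw [hfX z hz, hfC s' hs'] at heq
        omega
      · rw [Set.mem_Iio] at hs
        rw [hfX z' hz', hfC s hs] at heq
        omega
      · rw [Set.mem_Iio] at hs hs'
        rw [hfC s hs, hfC s' hs'] at heq
        rw [heq]
    · rintro z (hz | ⟨s, hs, rfl⟩)
      · obtain ⟨hgr, hglow, hgup⟩ := hg (phiMap Q i k a z) ⟨z, hz, rfl⟩
        rw [hfX z hz]
        refine ⟨by omega, ?_, ?_⟩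
        · rcases hE₀cases z (hX hz) with ⟨tt, htt, hzeq⟩ | hIcc
          · subst hzeq
            have hy : phiMap Q i k a (npd Q tt) = (tt - a) + 1 := by
              have := hφS (tt - a) (by omega)
              rwa [show a + (tt - a) = tt from by omega] at this
            rw [hy] at hglow hgr
            have hgk : g ((tt - a) + 1) < k := by
              by_contra hge
              push_neg at hge
              have hlt2 := hltT_hi (g ((tt - a) + 1) - k) (by omega)
              rw [show k + (g ((tt - a) + 1) - k) = g ((tt - a) + 1) from by omega] at hlt2
              rw [hlt2] at hglow
              have := hqd_pos (g ((tt - a) + 1) - k) (by omega)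
              omega
            rw [hltT_lo _ hgk] at hglow
            rw [hy]
            exact hlq_le _ tt (by omega) (by omega)
          · rw [hφtail z (by omega)] at hglow hgup hgr ⊢
            by_cases hgk : g (z - i + k) < k
            · have := hlq_le_i (a + g (z - i + k)) (by omega)
              omega
            · push_neg at hgk
              have hlt2 := hltT_hi (g (z - i + k) - k) (by omega)
              rw [show k + (g (z - i + k) - k) = g (z - i + k) from by omega] at hlt2
              rw [hlt2] at hglow
              have hlq2 := hQsplit (g (z - i + k) - k) (by omega)
              rw [show a + k + (g (z - i + k) - k) = a + g (z - i + k) from by omega] at hlq2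
              omega
        · rcases hE₀cases z (hX hz) with ⟨tt, htt, hzeq⟩ | hIcc
          · subst hzeq
            have hy : phiMap Q i k a (npd Q tt) = (tt - a) + 1 := by
              have := hφS (tt - a) (by omega)
              rwa [show a + (tt - a) = tt from by omega] at this
            rw [hy]
            have h1 := hPsplit (g ((tt - a) + 1)) (by rw [hy] at hgr; omega)
            have h2 := hlq_le_i tt (by omega)
            omega
          · rw [hφtail z (by omega)] at hgup hgr ⊢
            have h1 := hPsplit (g (z - i + k)) (by omega)
            rw [hupT _ (by omega)] at hgup
            omega
      · rw [Set.mem_Iio] at hs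
        rw [hfC s hs]
        exact ⟨by omega, le_refl _, hbrQP s (by omega)⟩
end
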